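/- Let X be a graph and δ ≥ 0 with X δ-hyperbolic, and let V be a 1-injective Banach space. Then every bounded 2-cocycle f ∈ Z²_{(∞)}(X;V) is the coboundary of some g ∈ C¹_{(∞)}(X;V). Moreover, there exist R₀ ∈ ℕ and a function K: ℕ × ℝ≥0 → ℝ≥0 depending only on δ, such that g can be chosen with |g|_∞^R ≤ K(R, |f|_∞^R) for every integer R ≥ R₀. In particular, H²_{(∞)}(X;V) = 0 for all hyperbolic graphs X and 1-injective Banach spaces V. -/

import Mathlib

open Finsupp

variable {V : Type*}

/-- 0-chains. -/
abbrev C0 (V : Type*) := V →₀ ℝ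
/-- 1-chains: free real vector space on ordered pairs of vertices. -/
abbrev C1 (V : Type*) := (V × V) →₀ ℝ
/-- 2-chains: free real vector space on ordered triples of vertices. -/
abbrev C2 (V : Type*) := (V × V × V) →₀ ℝ
/-- 3-chains. -/
abbrev C3 (V : Type*) := (V × V × V × V) →₀ ℝ

/-- ℓ¹-norm of a finitely supported chain. -/
noncomputable def l1 {α : Type*} (c : α →₀ ℝ) : ℝ := c.support.sum fun t => |c t|

/-- Boundary map ∂ : C₂ → C₁, (x₀,x₁,x₂) ↦ (x₁,x₂) − (x₀,x₂) + (x₀,x₁). -/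
noncomputable def bdry2 : C2 V →ₗ[ℝ] C1 V :=
  Finsupp.lsum ℝ fun t => LinearMap.toSpanSingleton ℝ (C1 V)
    (single (t.2.1, t.2.2) 1 - single (t.1, t.2.2) 1 + single (t.1, t.2.1) 1)

/-- Boundary map ∂ : C₁ → C₀, (x₀,x₁) ↦ x₁ − x₀. -/
noncomputable def bdry1 : C1 V →ₗ[ℝ] C0 V :=
  Finsupp.lsum ℝ fun t => LinearMap.toSpanSingleton ℝ (C0 V)
    (single t.2 1 - single t.1 1)

/-- Boundary map ∂ : C₃ → C₂. -/
noncomputable def bdry3 : C3 V →ₗ[ℝ] C2 V :=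
  Finsupp.lsum ℝ fun t => LinearMap.toSpanSingleton ℝ (C2 V)
    (single (t.2.1, t.2.2.1, t.2.2.2) 1 - single (t.1, t.2.2.1, t.2.2.2) 1
      + single (t.1, t.2.1, t.2.2.2) 1 - single (t.1, t.2.1, t.2.2.1) 1)

/-- Two vertices are at (finite) distance at most R. -/
def pairOK (G : SimpleGraph V) (R : ℕ) (a b : V) : Prop :=
  G.Reachable a b ∧ G.dist a b ≤ R

/-- Membership in C₁^R : supported on pairs at distance ≤ R. -/
def memC1R (G : SimpleGraph V) (R : ℕ) (c : C1 V) : Prop :=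
  ∀ t ∈ c.support, pairOK G R t.1 t.2

/-- Membership in C₂^R : supported on triples of diameter ≤ R. -/
def memC2R (G : SimpleGraph V) (R : ℕ) (c : C2 V) : Prop :=
  ∀ t ∈ c.support, pairOK G R t.1 t.2.1 ∧ pairOK G R t.1 t.2.2 ∧ pairOK G R t.2.1 t.2.2

/-- Membership in B₁^R = ∂C₂^R. -/
def memB1R (G : SimpleGraph V) (R : ℕ) (b : C1 V) : Prop :=
  ∃ a : C2 V, memC2R G R a ∧ bdry2 a = b

/-- The filling norm ‖b‖_F^R = inf of ℓ¹-norms of fillings in C₂^R. -/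
noncomputable def fillNorm (G : SimpleGraph V) (R : ℕ) (b : C1 V) : ℝ :=
  sInf {r | ∃ a : C2 V, memC2R G R a ∧ bdry2 a = b ∧ r = l1 a}

/-- The 1-chain c(p) associated to a walk p. -/
noncomputable def walkChain (G : SimpleGraph V) {x y : V} (p : G.Walk x y) : C1 V :=
  (p.darts.map fun d => single d.toProd (1 : ℝ)).sum

/-- A walk is geodesic if its length realizes the distance of its endpoints. -/
def IsGeodesicWalk (G : SimpleGraph V) {x y : V} (p : G.Walk x y) : Prop :=
  p.length = G.dist x y

/-- Geodesic triangles of G are n-slim. -/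
def SlimTriangles (G : SimpleGraph V) (n : ℕ) : Prop :=
  ∀ (x y z : V) (p : G.Walk x y) (q : G.Walk y z) (r : G.Walk x z),
    IsGeodesicWalk G p → IsGeodesicWalk G q → IsGeodesicWalk G r →
    (∀ v ∈ p.support, ∃ w, (w ∈ q.support ∨ w ∈ r.support) ∧ G.dist v w ≤ n) ∧
    (∀ v ∈ q.support, ∃ w, (w ∈ p.support ∨ w ∈ r.support) ∧ G.dist v w ≤ n) ∧
    (∀ v ∈ r.support, ∃ w, (w ∈ p.support ∨ w ∈ q.support) ∧ G.dist v w ≤ n)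

/-- A real chain has integer coefficients. -/
def IntCoeffs {α : Type*} (c : α →₀ ℝ) : Prop := ∀ t, ∃ n : ℤ, c t = n

/-- X has a finite homological isoperimetric function with parameters R₀, θ :
for every closed path p, c(p) ∈ B₁^{R₀} and ‖c(p)‖_F^{R₀} ≤ θ(length p). -/
def FinHomIsop (G : SimpleGraph V) (R₀ : ℕ) (θ : ℕ → ℝ) : Prop :=
  ∀ (x : V) (p : G.Walk x x), memB1R G R₀ (walkChain G p) ∧
    fillNorm G R₀ (walkChain G p) ≤ θ p.length

/-- A 2-cochain is bounded on each C₂^R. -/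
def Bdd2 {W : Type*} [NormedAddCommGroup W] [NormedSpace ℝ W]
    (G : SimpleGraph V) (f : C2 V →ₗ[ℝ] W) : Prop :=
  ∀ R : ℕ, ∃ M : ℝ, ∀ c : C2 V, memC2R G R c → ‖f c‖ ≤ M * l1 c

/-- A 1-cochain is bounded on each C₁^R. -/
def Bdd1 {W : Type*} [NormedAddCommGroup W] [NormedSpace ℝ W]
    (G : SimpleGraph V) (f : C1 V →ₗ[ℝ] W) : Prop :=
  ∀ R : ℕ, ∃ M : ℝ, ∀ c : C1 V, memC1R G R c → ‖f c‖ ≤ M * l1 c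

/-- A Banach space is 1-injective: bounded linear maps into it extend from
subspaces of normed spaces with the same norm. -/
def IsOneInjective (W : Type*) [NormedAddCommGroup W] [NormedSpace ℝ W] : Prop :=
  ∀ (E : Type) [NormedAddCommGroup E] [NormedSpace ℝ E],
    ∀ (p : Subspace ℝ E) (φ : p →L[ℝ] W),
      ∃ ψ : E →L[ℝ] W, (∀ x : p, ψ x = φ x) ∧ ‖ψ‖ ≤ ‖φ‖

section Aux

namespace HypH2

open Finsupp

/-! ### Basic lemmas about `l1` -/

lemma l1_nonneg {α : Type*} (c : α →₀ ℝ) : 0 ≤ l1 c :=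
  Finset.sum_nonneg fun _ _ => abs_nonneg _

lemma l1_eq_sum_subset {α : Type*} {c : α →₀ ℝ} {s : Finset α} (h : c.support ⊆ s) :
    l1 c = s.sum fun t => |c t| :=
  Finset.sum_subset h (fun x _ hx => by
    simp [Finsupp.notMem_support_iff.mp hx])

@[simp] lemma l1_zero {α : Type*} : l1 (0 : α →₀ ℝ) = 0 := by simp [l1]

lemma l1_add_le {α : Type*} (a b : α →₀ ℝ) : l1 (a + b) ≤ l1 a + l1 b := by
  classical
  have hsub : (a + b).support ⊆ a.support ∪ b.support := Finsupp.support_add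
  rw [l1_eq_sum_subset hsub, l1_eq_sum_subset (Finset.subset_union_left (s₂ := b.support)),
    l1_eq_sum_subset (Finset.subset_union_right (s₁ := a.support)), ← Finset.sum_add_distrib]
  exact Finset.sum_le_sum fun t _ => by simpa using abs_add_le (a t) (b t)

lemma l1_smul {α : Type*} (r : ℝ) (a : α →₀ ℝ) : l1 (r • a) = |r| * l1 a := by
  rcases eq_or_ne r 0 with rfl | hr
  · simp
  · rw [l1, l1, Finsupp.support_smul_eq hr, Finset.mul_sum]
    exact Finset.sum_congr rfl fun t _ => by
      rw [Finsupp.smul_apply, smul_eq_mul, abs_mul]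

lemma l1_neg {α : Type*} (a : α →₀ ℝ) : l1 (-a) = l1 a := by
  have := l1_smul (-1 : ℝ) a; simpa using this

lemma l1_sub_le {α : Type*} (a b : α →₀ ℝ) : l1 (a - b) ≤ l1 a + l1 b := by
  rw [sub_eq_add_neg]
  exact (l1_add_le a (-b)).trans (by rw [l1_neg])

lemma l1_single_le {α : Type*} (t : α) (r : ℝ) : l1 (single t r) ≤ |r| := by
  rcases eq_or_ne r 0 with rfl | hr
  · simp [abs_nonneg]
  · rw [l1, Finsupp.support_single_ne_zero _ hr]
    simp

lemma l1_eq_zero {α : Type*} {c : α →₀ ℝ} (h : l1 c = 0) : c = 0 := by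
  ext t
  by_cases ht : t ∈ c.support
  · have h1 : |c t| ≤ 0 := h ▸ Finset.single_le_sum (fun s _ => abs_nonneg (c s)) ht
    have := abs_nonneg (c t)
    simp [le_antisymm h1 this |> abs_eq_zero.mp]
  · simpa using Finsupp.notMem_support_iff.mp ht

lemma abs_apply_le_l1 {α : Type*} (c : α →₀ ℝ) (t : α) : |c t| ≤ l1 c := by
  by_cases ht : t ∈ c.support
  · exact Finset.single_le_sum (fun s _ => abs_nonneg (c s)) ht
  · simp [Finsupp.notMem_support_iff.mp ht, l1_nonneg]

lemma l1_listsum_le {α : Type*} (l : List (α →₀ ℝ)) : l1 l.sum ≤ (l.map l1).sum := by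
  induction l with
  | nil => simp
  | cons a l ih =>
    simp only [List.sum_cons, List.map_cons]
    exact (l1_add_le a l.sum).trans (by linarith)

lemma l1_finsetsum_le {α β : Type*} (s : Finset β) (f : β → (α →₀ ℝ)) :
    l1 (s.sum f) ≤ s.sum fun b => l1 (f b) := by
  classical
  induction s using Finset.induction_on with
  | empty => simp
  | insert _ _ hb ih =>
    rw [Finset.sum_insert hb, Finset.sum_insert hb]
    exact (l1_add_le _ _).trans (by linarith)

end HypH2

end Aux
namespace HypH2

open Finsupp

variable {V : Type*}

/-! ### Boundary maps on singles -/

lemma bdry1_single (t : V × V) (r : ℝ) :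
    bdry1 (single t r) = r • (single t.2 1 - single t.1 1 : C0 V) := by
  simp [bdry1, Finsupp.lsum_single, LinearMap.toSpanSingleton_apply]

lemma bdry2_single (t : V × V × V) (r : ℝ) :
    bdry2 (single t r) = r • (single (t.2.1, t.2.2) 1 - single (t.1, t.2.2) 1
      + single (t.1, t.2.1) 1 : C1 V) := by
  simp [bdry2, Finsupp.lsum_single, LinearMap.toSpanSingleton_apply]

lemma bdry3_single (t : V × V × V × V) (r : ℝ) :
    bdry3 (single t r) = r • (single (t.2.1, t.2.2.1, t.2.2.2) 1
      - single (t.1, t.2.2.1, t.2.2.2) 1 + single (t.1, t.2.1, t.2.2.2) 1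
      - single (t.1, t.2.1, t.2.2.1) 1 : C2 V) := by
  simp [bdry3, Finsupp.lsum_single, LinearMap.toSpanSingleton_apply]

/-! ### memC1R / memC2R closure lemmas -/

variable {G : SimpleGraph V}

lemma memC1R_mono {R R' : ℕ} (h : R ≤ R') {c : C1 V} (hc : memC1R G R c) :
    memC1R G R' c := fun t ht => ⟨(hc t ht).1, le_trans (hc t ht).2 h⟩

lemma memC2R_mono {R R' : ℕ} (h : R ≤ R') {c : C2 V} (hc : memC2R G R c) :
    memC2R G R' c := by
  intro t ht
  obtain ⟨h1, h2, h3⟩ := hc t ht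
  exact ⟨⟨h1.1, h1.2.trans h⟩, ⟨h2.1, h2.2.trans h⟩, ⟨h3.1, h3.2.trans h⟩⟩

lemma memC2R_zero {R : ℕ} : memC2R G R (0 : C2 V) := by
  intro t ht; simp at ht

lemma memC2R_add {R : ℕ} {a b : C2 V} (ha : memC2R G R a) (hb : memC2R G R b) :
    memC2R G R (a + b) := by
  classical
  intro t ht
  have := Finsupp.support_add ht
  rcases Finset.mem_union.mp this with h | h
  · exact ha t h
  · exact hb t h

lemma memC2R_smul {R : ℕ} {a : C2 V} (r : ℝ) (ha : memC2R G R a) :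
    memC2R G R (r • a) := by
  intro t ht
  exact ha t (Finsupp.support_smul ht)

lemma memC2R_neg {R : ℕ} {a : C2 V} (ha : memC2R G R a) : memC2R G R (-a) := by
  have := memC2R_smul (-1 : ℝ) ha; simpa using this

lemma memC2R_sub {R : ℕ} {a b : C2 V} (ha : memC2R G R a) (hb : memC2R G R b) :
    memC2R G R (a - b) := by
  rw [sub_eq_add_neg]; exact memC2R_add ha (memC2R_neg hb)

lemma memC2R_single {R : ℕ} {t : V × V × V} {r : ℝ}
    (h1 : pairOK G R t.1 t.2.1) (h2 : pairOK G R t.1 t.2.2)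
    (h3 : pairOK G R t.2.1 t.2.2) : memC2R G R (single t r : C2 V) := by
  intro s hs
  have : s = t := by
    by_contra hne
    have := Finsupp.support_single_subset hs
    simp at this
    exact hne this
  subst this; exact ⟨h1, h2, h3⟩

lemma memC2R_listsum {R : ℕ} (l : List (C2 V)) (h : ∀ a ∈ l, memC2R G R a) :
    memC2R G R l.sum := by
  induction l with
  | nil => simpa using memC2R_zero
  | cons a l ih =>
    rw [List.sum_cons]
    exact memC2R_add (h a (by simp)) (ih fun b hb => h b (by simp [hb]))

lemma memC2R_finsetsum {β : Type*} {R : ℕ} (s : Finset β) (f : β → C2 V)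
    (h : ∀ b ∈ s, memC2R G R (f b)) : memC2R G R (s.sum f) := by
  classical
  induction s using Finset.induction_on with
  | empty => simpa using memC2R_zero
  | @insert b s hb ih =>
    rw [Finset.sum_insert hb]
    exact memC2R_add (h b (by simp)) (ih fun c hc => h c (by simp [hc]))

lemma memC1R_add {R : ℕ} {a b : C1 V} (ha : memC1R G R a) (hb : memC1R G R b) :
    memC1R G R (a + b) := by
  classical
  intro t ht
  rcases Finset.mem_union.mp (Finsupp.support_add ht) with h | h
  · exact ha t h
  · exact hb t h

lemma memC1R_smul {R : ℕ} {a : C1 V} (r : ℝ) (ha : memC1R G R a) :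
    memC1R G R (r • a) := fun t ht => ha t (Finsupp.support_smul ht)

lemma pairOK_of_dist (hconn : G.Connected) {R : ℕ} {a b : V} (h : G.dist a b ≤ R) :
    pairOK G R a b := ⟨hconn a b, h⟩

end HypH2
namespace HypH2

open Finsupp SimpleGraph

variable {V : Type*} {G : SimpleGraph V}

/-! ### Walk take/drop infrastructure -/

def wtake {x y : V} : (p : G.Walk x y) → (n : ℕ) → G.Walk x (p.getVert n)
  | SimpleGraph.Walk.nil, _ => SimpleGraph.Walk.nil
  | SimpleGraph.Walk.cons _ _, 0 => SimpleGraph.Walk.nil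
  | SimpleGraph.Walk.cons h q, (n+1) => SimpleGraph.Walk.cons h (wtake q n)

def wdrop {x y : V} : (p : G.Walk x y) → (n : ℕ) → G.Walk (p.getVert n) y
  | SimpleGraph.Walk.nil, _ => SimpleGraph.Walk.nil
  | SimpleGraph.Walk.cons h q, 0 => SimpleGraph.Walk.cons h q
  | SimpleGraph.Walk.cons _ q, (n+1) => wdrop q n

lemma length_wtake {x y : V} (p : G.Walk x y) (n : ℕ) :
    (wtake p n).length = min n p.length := by
  induction p generalizing n with
  | nil => simp [wtake]
  | cons h q ih =>
    cases n with
    | zero => simp [wtake]; rfl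
    | succ n => simp [wtake, ih, Nat.succ_min_succ]

lemma length_wdrop {x y : V} (p : G.Walk x y) (n : ℕ) :
    (wdrop p n).length = p.length - n := by
  induction p generalizing n with
  | nil => simp [wdrop]
  | cons h q ih =>
    cases n with
    | zero => simp [wdrop]; rfl
    | succ n => simpa [wdrop, ih] using (ih n)

lemma getVert_wtake {x y : V} (p : G.Walk x y) (n i : ℕ) :
    (wtake p n).getVert i = p.getVert (min i n) := by
  induction p generalizing n i with
  | nil => rfl
  | cons h q ih =>
    cases n with
    | zero => simp only [wtake, Nat.min_zero]; rfl
    | succ n =>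
      cases i with
      | zero => simp [wtake]
      | succ i =>
        simp only [wtake, Walk.getVert_cons_succ, ih, Nat.succ_min_succ]

lemma getVert_wdrop {x y : V} (p : G.Walk x y) (n i : ℕ) :
    (wdrop p n).getVert i = p.getVert (n + i) := by
  induction p generalizing n i with
  | nil => rfl
  | cons h q ih =>
    cases n with
    | zero => simp [wdrop]; rfl
    | succ n =>
      simp only [wdrop, ih, Walk.getVert_cons_succ, Nat.succ_add]

lemma wtake_append_wdrop {x y : V} (p : G.Walk x y) (n : ℕ) :
    (wtake p n).append (wdrop p n) = p := by
  induction p generalizing n with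
  | nil => simp [wtake, wdrop]
  | cons h q ih =>
    cases n with
    | zero => simp [wtake, wdrop]; rfl
    | succ n => simp [wtake, wdrop, ih]

/-! ### walkChain lemmas -/

@[simp] lemma walkChain_nil {x : V} : walkChain G (SimpleGraph.Walk.nil : G.Walk x x) = 0 := by
  simp [walkChain]

lemma walkChain_cons {x v y : V} (h : G.Adj x v) (p : G.Walk v y) :
    walkChain G (SimpleGraph.Walk.cons h p) = single (x, v) 1 + walkChain G p := by
  simp [walkChain]

lemma walkChain_append {x y z : V} (p : G.Walk x y) (q : G.Walk y z) :
    walkChain G (p.append q) = walkChain G p + walkChain G q := by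
  simp [walkChain, Walk.darts_append]

lemma walkChain_copy {x y x' y' : V} (p : G.Walk x y) (hx : x = x') (hy : y = y') :
    walkChain G (p.copy hx hy) = walkChain G p := by
  simp [walkChain, Walk.darts_copy]

lemma bdry1_walkChain {x y : V} (p : G.Walk x y) :
    bdry1 (walkChain G p) = single y 1 - single x 1 := by
  induction p with
  | nil => simp
  | cons h q ih =>
    rw [walkChain_cons, map_add, ih, bdry1_single]
    simp only [one_smul]
    abel

lemma l1_walkChain_le {x y : V} (p : G.Walk x y) : l1 (walkChain G p) ≤ p.length := by
  induction p with
  | nil => simp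
  | @cons u v w h q ih =>
    rw [walkChain_cons]
    refine (l1_add_le _ _).trans ?_
    have h1 : l1 (single (u, v) (1:ℝ)) ≤ |(1:ℝ)| := l1_single_le _ _
    simp only [Walk.length_cons]
    push_cast
    simp only [abs_one] at h1
    linarith

lemma walkChain_support {x y : V} (p : G.Walk x y) {t : V × V}
    (ht : t ∈ (walkChain G p).support) : ∃ d ∈ p.darts, d.toProd = t := by
  classical
  induction p with
  | nil => simp [walkChain] at ht
  | cons h q ih =>
    rw [walkChain_cons] at ht
    rcases Finset.mem_union.mp (Finsupp.support_add ht) with h' | h'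
    · have := Finsupp.support_single_subset h'
      simp only [Finset.mem_singleton] at this
      exact ⟨⟨(_, _), h⟩, by simp, by simp [this]⟩
    · obtain ⟨d, hd, hdt⟩ := ih h'
      exact ⟨d, by simp [hd], hdt⟩

lemma memC1R_walkChain (hconn : G.Connected) {x y : V} (p : G.Walk x y) {R : ℕ}
    (hR : 1 ≤ R) : memC1R G R (walkChain G p) := by
  intro t ht
  obtain ⟨d, _, rfl⟩ := walkChain_support p ht
  refine pairOK_of_dist hconn ?_
  exact le_trans (SimpleGraph.dist_le (Walk.cons d.adj Walk.nil)) (by simpa using hR)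

/-! ### distances along walks -/

lemma dist_start_le_of_mem_support (hconn : G.Connected) {x y : V} (p : G.Walk x y)
    {w : V} (hw : w ∈ p.support) : G.dist x w ≤ p.length := by
  classical
  exact le_trans (SimpleGraph.dist_le (p.takeUntil w hw)) (Walk.length_takeUntil_le p hw)

lemma geodesic_split (hconn : G.Connected) {x y : V} {p : G.Walk x y}
    (hp : IsGeodesicWalk G p) {w : V} (hw : w ∈ p.support) :
    G.dist x w + G.dist w y = G.dist x y := by
  classical
  have hsplit := p.take_spec hw
  have hlen : (p.takeUntil w hw).length + (p.dropUntil w hw).length = p.length := by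
    rw [← Walk.length_append, hsplit]
  have h1 : G.dist x w ≤ (p.takeUntil w hw).length := SimpleGraph.dist_le _
  have h2 : G.dist w y ≤ (p.dropUntil w hw).length := SimpleGraph.dist_le _
  have h3 : G.dist x y ≤ G.dist x w + G.dist w y := hconn.dist_triangle
  have h4 : p.length = G.dist x y := hp
  omega

end HypH2
namespace HypH2

open Finsupp SimpleGraph

variable {V : Type*} {G : SimpleGraph V}

/-! ### Fan fillings -/

noncomputable def fan (z : V) {x y : V} (p : G.Walk x y) : C2 V :=
  (p.darts.map fun d => single (z, d.toProd.1, d.toProd.2) (1:ℝ)).sum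

@[simp] lemma fan_nil {z x : V} : fan z (SimpleGraph.Walk.nil : G.Walk x x) = 0 := by
  simp [fan]

lemma fan_cons {z x v y : V} (h : G.Adj x v) (q : G.Walk v y) :
    fan z (SimpleGraph.Walk.cons h q) = single (z, x, v) 1 + fan z q := by
  simp [fan]

lemma bdry2_fan (z : V) {x y : V} (p : G.Walk x y) :
    bdry2 (fan z p) = walkChain G p - single (z, y) 1 + single (z, x) 1 := by
  induction p with
  | nil => simp
  | @cons u v w h q ih =>
    rw [fan_cons, map_add, ih, bdry2_single, walkChain_cons]
    simp only [one_smul]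
    abel

lemma bdry2_fan_closed (z : V) {x : V} (p : G.Walk x x) (hz : z = x) :
    bdry2 (fan z p) = walkChain G p := by
  rw [bdry2_fan, hz]; abel

lemma l1_fan_le (z : V) {x y : V} (p : G.Walk x y) : l1 (fan z p) ≤ p.length := by
  induction p with
  | nil => simp
  | @cons u v w h q ih =>
    rw [fan_cons]
    refine (l1_add_le _ _).trans ?_
    have h1 : l1 (single (z, u, v) (1:ℝ)) ≤ |(1:ℝ)| := l1_single_le _ _
    simp only [abs_one] at h1
    simp only [Walk.length_cons]
    push_cast
    linarith

lemma adj_dist_le {u v : V} (h : G.Adj u v) : G.dist u v ≤ 1 := by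
  simpa using SimpleGraph.dist_le (Walk.cons h Walk.nil)

lemma memC2R_fan (hconn : G.Connected) {z x y : V} (p : G.Walk x y) {R : ℕ}
    (hR : 1 ≤ R) (hz : ∀ w ∈ p.support, G.dist z w ≤ R) : memC2R G R (fan z p) := by
  induction p with
  | nil => simpa using memC2R_zero
  | @cons u v w h q ih =>
    rw [fan_cons]
    refine memC2R_add (memC2R_single ?_ ?_ ?_) (ih fun w hw => hz w (by simp [hw]))
    · exact pairOK_of_dist hconn (hz u (by simp))
    · exact pairOK_of_dist hconn (hz v (by simp))
    · exact pairOK_of_dist hconn ((adj_dist_le h).trans hR)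

lemma getVert_mem_support {x y : V} (p : G.Walk x y) (i : ℕ) :
    p.getVert i ∈ p.support := by
  induction p generalizing i with
  | nil => simp [Walk.getVert]
  | cons h q ih =>
    cases i with
    | zero => simp
    | succ i => simp only [Walk.getVert_cons_succ, Walk.support_cons, List.mem_cons]
                exact Or.inr (ih i)

lemma dist_getVert_le (hconn : G.Connected) {x y : V} (p : G.Walk x y) {i j : ℕ}
    (hij : i ≤ j) (hj : j ≤ p.length) :
    G.dist (p.getVert i) (p.getVert j) ≤ j - i := by
  have h := SimpleGraph.dist_le (wtake (wdrop p i) (j - i))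
  have hl : (wtake (wdrop p i) (j - i)).length ≤ j - i := by
    rw [length_wtake]; omega
  have h' := h.trans hl
  have e : (wdrop p i).getVert (j - i) = p.getVert j := by
    rw [getVert_wdrop]; congr 1; omega
  rw [e] at h'
  exact h'

/-! ### The local-geodesic progression lemma -/

lemma psi (hconn : G.Connected) {δ : ℕ} (hslim : SlimTriangles G δ) :
    ∀ n : ℕ, ∀ {x y : V} (p : G.Walk x y), p.length = n →
    (∀ i j : ℕ, i ≤ j → j ≤ n → j - i ≤ 4*δ+4 →
      G.dist (p.getVert i) (p.getVert j) = j - i) →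
    2*δ+2 ≤ n → G.dist x (p.getVert (n - (2*δ+2))) + 1 ≤ G.dist x y := by
  intro n
  induction n using Nat.strong_induction_on with
  | _ n IH =>
    intro x y p hlen hwin hn
    have hyend : p.getVert n = y := by rw [← hlen]; exact p.getVert_length
    set a := 2*δ+2 with ha
    by_cases hsmall : n ≤ 4*δ+4
    · -- the whole walk is geodesic
      have hxy : G.dist x y = n := by
        have := hwin 0 n (by omega) le_rfl (by omega)
        rw [hyend, Walk.getVert_zero] at this
        simpa using this
      have hxm : G.dist x (p.getVert (n - a)) = n - a := by
        have := hwin 0 (n - a) (by omega) (by omega) (by omega)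
        simpa [Walk.getVert_zero] using this
      omega
    · push_neg at hsmall
      set t := n - (2*a) with hta
      set m := n - a with hm
      -- the window walk σ from getVert t to y
      have hlendrop : (wdrop p t).length = 2*a := by rw [length_wdrop]; omega
      have hgeo_σ : IsGeodesicWalk G (wdrop p t) := by
        show (wdrop p t).length = G.dist (p.getVert t) y
        have := hwin t n (by omega) le_rfl (by omega)
        rw [hyend] at this
        rw [hlendrop, this]; omega
      obtain ⟨β, hβlen⟩ := hconn.exists_walk_length_eq_dist x (p.getVert t)
      obtain ⟨γ, hγlen⟩ := hconn.exists_walk_length_eq_dist x y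
      have hslim2 := (hslim x (p.getVert t) y β (wdrop p t) γ hβlen hgeo_σ hγlen).2.1
      have hvmσ : p.getVert m ∈ (wdrop p t).support := by
        have : (wdrop p t).getVert a = p.getVert m := by
          rw [getVert_wdrop]; congr 1; omega
        rw [← this]; exact getVert_mem_support _ _
      obtain ⟨w, hwor, hdvw⟩ := hslim2 (p.getVert m) hvmσ
      -- distances along the walk
      have dmn : G.dist (p.getVert m) y = a := by
        have := hwin m n (by omega) le_rfl (by omega)
        rw [hyend] at this
        rw [this]; omega
      have dtm : G.dist (p.getVert t) (p.getVert m) = a := by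
        rw [hwin t m (by omega) (by omega) (by omega)]; omega
      have hxm_le : G.dist x (p.getVert m) ≤ G.dist x w + δ := by
        have h1 : G.dist x (p.getVert m) ≤ G.dist x w + G.dist w (p.getVert m) :=
          hconn.dist_triangle
        have h2 : G.dist w (p.getVert m) ≤ δ := by rw [SimpleGraph.dist_comm]; exact hdvw
        omega
      rcases hwor with hwβ | hwγ
      · -- w on β : contradiction with IH
        exfalso
        have hsplit : G.dist x w + G.dist w (p.getVert t) = G.dist x (p.getVert t) :=
          geodesic_split hconn hβlen hwβ
        have h5 : a ≤ G.dist w (p.getVert t) + δ := by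
          have h6 : G.dist (p.getVert t) (p.getVert m) ≤
              G.dist (p.getVert t) w + G.dist w (p.getVert m) := hconn.dist_triangle
          have h7 : G.dist w (p.getVert m) ≤ δ := by rw [SimpleGraph.dist_comm]; exact hdvw
          have h8 : G.dist (p.getVert t) w = G.dist w (p.getVert t) := SimpleGraph.dist_comm ..
          omega
        -- IH applied to the prefix of length m
        have hmlt : m < n := by omega
        have hIH := IH m hmlt (wtake p m) (by rw [length_wtake]; omega) ?_ (by omega)
        · have e1 : (wtake p m).getVert (m - a) = p.getVert t := by
            rw [getVert_wtake]; congr 1; omega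
          rw [e1] at hIH
          -- hIH : dist x (getVert t) + 1 ≤ dist x (getVert m)
          omega
        · intro i j hij hj hL
          have e2 : (wtake p m).getVert i = p.getVert i := by
            rw [getVert_wtake]; congr 1; omega
          have e3 : (wtake p m).getVert j = p.getVert j := by
            rw [getVert_wtake]; congr 1; omega
          rw [e2, e3]
          exact hwin i j hij (by omega) hL
      · -- w on γ : progression
        have hsplit : G.dist x w + G.dist w y = G.dist x y :=
          geodesic_split hconn hγlen hwγ
        have h5 : a ≤ δ + G.dist w y := by
          have h6 : G.dist (p.getVert m) y ≤ G.dist (p.getVert m) w + G.dist w y :=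
            hconn.dist_triangle
          omega
        omega

end HypH2
namespace HypH2

open Finsupp SimpleGraph

variable {V : Type*} {G : SimpleGraph V}

/-! ### Shortcut lemma -/

lemma exists_shortcut (hconn : G.Connected) {δ : ℕ} (hslim : SlimTriangles G δ)
    {x : V} (p : G.Walk x x) (hn : 1 ≤ p.length) :
    ∃ i j : ℕ, i < j ∧ j ≤ p.length ∧ j - i ≤ 4*δ+4 ∧
      G.dist (p.getVert i) (p.getVert j) < j - i := by
  by_contra hcon
  push_neg at hcon
  have hwin : ∀ i j : ℕ, i ≤ j → j ≤ p.length → j - i ≤ 4*δ+4 →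
      G.dist (p.getVert i) (p.getVert j) = j - i := by
    intro i j hij hj hL
    rcases eq_or_lt_of_le hij with rfl | hlt
    · simp [SimpleGraph.dist_self]
    · have h1 := dist_getVert_le hconn p hij hj
      have h2 := hcon i j hlt hj hL
      omega
  by_cases hna : 2*δ+2 ≤ p.length
  · have h := psi hconn hslim p.length p rfl hwin hna
    rw [SimpleGraph.dist_self] at h
    omega
  · have h := hwin 0 p.length (by omega) le_rfl (by omega)
    rw [Walk.getVert_zero, p.getVert_length, SimpleGraph.dist_self] at h
    omega

/-! ### Symmetric filler : c(q) + c(q.reverse) is a boundary -/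

noncomputable def symFill {x y : V} (q : G.Walk x y) : C2 V :=
  (q.darts.map fun d => single (d.toProd.1, d.toProd.2, d.toProd.1) (1:ℝ)
    + single (d.toProd.1, d.toProd.1, d.toProd.1) (1:ℝ)).sum

@[simp] lemma symFill_nil {x : V} : symFill (SimpleGraph.Walk.nil : G.Walk x x) = 0 := by
  simp [symFill]

lemma symFill_cons {x v y : V} (h : G.Adj x v) (q : G.Walk v y) :
    symFill (SimpleGraph.Walk.cons h q)
      = (single (x, v, x) 1 + single (x, x, x) 1) + symFill q := by
  simp [symFill]

lemma bdry2_symFill {x y : V} (q : G.Walk x y) :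
    bdry2 (symFill q) = walkChain G q + walkChain G q.reverse := by
  induction q with
  | nil => simp
  | @cons u v w h q ih =>
    rw [symFill_cons, map_add, map_add, ih, bdry2_single, bdry2_single,
      Walk.reverse_cons, walkChain_append, walkChain_cons, walkChain_cons, walkChain_nil]
    simp only [one_smul]
    abel

lemma l1_symFill_le {x y : V} (q : G.Walk x y) : l1 (symFill q) ≤ 2 * q.length := by
  induction q with
  | nil => simp
  | @cons u v w h q ih =>
    rw [symFill_cons]
    refine (l1_add_le _ _).trans ?_
    have h1 : l1 (single (u, v, u) (1:ℝ) + single (u, u, u) (1:ℝ)) ≤ 2 := by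
      refine (l1_add_le _ _).trans ?_
      have := l1_single_le ((u, v, u) : V × V × V) (1:ℝ)
      have := l1_single_le ((u, u, u) : V × V × V) (1:ℝ)
      simp only [abs_one] at *
      linarith
    simp only [Walk.length_cons]
    push_cast
    linarith

lemma memC2R_symFill (hconn : G.Connected) {x y : V} (q : G.Walk x y) {R : ℕ}
    (hR : 1 ≤ R) : memC2R G R (symFill q) := by
  induction q with
  | nil => simpa using memC2R_zero
  | @cons u v w h q ih =>
    rw [symFill_cons]
    refine memC2R_add (memC2R_add (memC2R_single ?_ ?_ ?_) (memC2R_single ?_ ?_ ?_)) ih <;>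
      refine pairOK_of_dist hconn ?_ <;>
      simp only [SimpleGraph.dist_self, Nat.zero_le] <;>
      first
        | exact (adj_dist_le h).trans hR
        | exact (SimpleGraph.dist_comm (u := v) (v := u) ▸ (adj_dist_le h)).trans hR

/-! ### Linear isoperimetric filling of closed walks -/

lemma walkfill (hconn : G.Connected) {δ : ℕ} (hslim : SlimTriangles G δ) :
    ∀ n : ℕ, ∀ {x : V} (p : G.Walk x x), p.length ≤ n →
    ∃ a : C2 V, memC2R G (8*δ+8) a ∧ bdry2 a = walkChain G p ∧
      l1 a ≤ (16*δ+16) * p.length := by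
  intro n
  induction n with
  | zero =>
    intro x p hp
    have : p = Walk.nil := Walk.Nil.eq_nil (Walk.length_eq_zero_iff.mp (by omega))
    subst this
    exact ⟨0, memC2R_zero, by simp, by simp⟩
  | succ n ih =>
    intro x p hp
    rcases Nat.eq_zero_or_pos p.length with h0 | h1
    · have : p = Walk.nil := Walk.Nil.eq_nil (Walk.length_eq_zero_iff.mp h0)
      subst this
      exact ⟨0, memC2R_zero, by simp, by simp⟩
    · obtain ⟨i, j, hij, hj, hL, hd⟩ := exists_shortcut hconn hslim p h1
      -- pieces of the walk
      set pre := wtake p i with hpre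
      set rest := wdrop p i with hrest
      set win := wtake rest (j - i) with hwin
      set suf := wdrop rest (j - i) with hsuf
      have e : rest.getVert (j - i) = p.getVert j := by
        rw [hrest, getVert_wdrop]; congr 1; omega
      obtain ⟨q, hqlen⟩ := hconn.exists_walk_length_eq_dist (p.getVert i) (p.getVert j)
      have hqshort : q.length < j - i := by rw [hqlen]; exact hd
      -- the new closed walk
      set p' := pre.append (q.append (suf.copy e rfl)) with hp'
      have hlenpre : pre.length = i := by rw [hpre, length_wtake]; omega
      have hlensuf : suf.length = p.length - j := by
        rw [hsuf, length_wdrop, hrest, length_wdrop]; omega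
      have hlenwin : win.length = j - i := by
        rw [hwin, length_wtake, hrest, length_wdrop]; omega
      have hp'len : p'.length + 1 ≤ p.length := by
        rw [hp', Walk.length_append, Walk.length_append, Walk.length_copy,
          hlenpre, hlensuf]
        omega
      obtain ⟨a', ha'mem, ha'b, ha'l1⟩ := ih p' (by omega)
      -- the small loop
      set loop := (win.copy rfl e).append q.reverse with hloop
      have hlooplen : loop.length = (j - i) + q.length := by
        rw [hloop, Walk.length_append, Walk.length_copy, Walk.length_reverse, hlenwin]
      -- chain identities
      have hchain : walkChain G p = walkChain G p' + walkChain G loop - bdry2 (symFill q) := by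
        have h1 : walkChain G p = walkChain G pre + walkChain G win + walkChain G suf := by
          conv_lhs => rw [← wtake_append_wdrop p i]
          rw [walkChain_append, ← hpre, ← hrest]
          conv_lhs => rw [← wtake_append_wdrop rest (j - i)]
          rw [walkChain_append, ← hwin, ← hsuf, add_assoc]
        rw [h1, hp', hloop, bdry2_symFill, walkChain_append, walkChain_append,
          walkChain_append, walkChain_copy, walkChain_copy]
        abel
      -- assemble the filling
      refine ⟨a' + fan (p.getVert i) loop - symFill q, ?_, ?_, ?_⟩
      · refine memC2R_sub (memC2R_add ha'mem ?_) (memC2R_symFill hconn q (by omega))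
        refine memC2R_fan hconn loop (by omega) ?_
        intro w hw
        refine (dist_start_le_of_mem_support hconn loop hw).trans ?_
        rw [hlooplen]; omega
      · rw [map_sub, map_add, ha'b, bdry2_fan_closed _ _ rfl, hchain]
      · have hf := l1_fan_le (p.getVert i) loop
        have hs := l1_symFill_le q
        have h2 : l1 (a' + fan (p.getVert i) loop - symFill q)
            ≤ l1 a' + l1 (fan (p.getVert i) loop) + l1 (symFill q) := by
          refine (l1_sub_le _ _).trans ?_
          have := l1_add_le a' (fan (p.getVert i) loop)
          linarith
        have hc1 : (loop.length : ℝ) ≤ (8*δ+7 : ℕ) := by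
          have : loop.length ≤ 8*δ+7 := by rw [hlooplen]; omega
          exact_mod_cast this
        have hc2 : (q.length : ℝ) ≤ (4*δ+3 : ℕ) := by
          have : q.length ≤ 4*δ+3 := by omega
          exact_mod_cast this
        have hc3 : ((16*δ+16 : ℕ) : ℝ) * p'.length + (16*δ+16 : ℕ)
            ≤ ((16*δ+16 : ℕ) : ℝ) * p.length := by
          have : ((16*δ+16) * p'.length + (16*δ+16) : ℕ) ≤ (16*δ+16) * p.length := by
            have := hp'len
            nlinarith [hp'len]
          exact_mod_cast this
        push_cast at *
        nlinarith [l1_nonneg a', l1_nonneg (fan (p.getVert i) loop), l1_nonneg (symFill q)]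

end HypH2
namespace HypH2

open Finsupp SimpleGraph

variable {V : Type*} {G : SimpleGraph V}

/-! ### The swap involution on 1-chains -/

noncomputable def swapC1 (V : Type*) : C1 V →ₗ[ℝ] C1 V :=
  Finsupp.lmapDomain ℝ ℝ (Prod.swap)

lemma swapC1_single (t : V × V) (r : ℝ) :
    swapC1 V (single t r) = single (t.2, t.1) r := by
  simp only [swapC1, Finsupp.lmapDomain_apply, Finsupp.mapDomain_single]
  rfl

lemma swapC1_apply (c : C1 V) (s : V × V) : swapC1 V c s = c (s.2, s.1) := by
  have h := Finsupp.mapDomain_apply (Prod.swap_injective (α := V) (β := V)) c (Prod.swap s)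
  rw [Prod.swap_swap] at h
  exact h

lemma swapC1_swapC1 (c : C1 V) : swapC1 V (swapC1 V c) = c := by
  ext s
  rw [swapC1_apply, swapC1_apply]

lemma l1_swapC1 (c : C1 V) : l1 (swapC1 V c) ≤ l1 c := by
  classical
  have hsub : (swapC1 V c).support ⊆ c.support.image Prod.swap := by
    intro t ht
    have : swapC1 V c t ≠ 0 := Finsupp.mem_support_iff.mp ht
    rw [swapC1_apply] at this
    refine Finset.mem_image.mpr ⟨(t.2, t.1), Finsupp.mem_support_iff.mpr this, ?_⟩
    simp
  rw [l1_eq_sum_subset hsub, Finset.sum_image (by intro a _ b _ h; exact Prod.swap_injective h)]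
  refine le_of_eq (Finset.sum_congr rfl fun t _ => ?_)
  rw [swapC1_apply]
  simp

lemma bdry1_swapC1 (c : C1 V) : bdry1 (swapC1 V c) = - bdry1 c := by
  have h : (bdry1 (V := V)).comp (swapC1 V) = - bdry1 := by
    refine Finsupp.lhom_ext fun t r => ?_
    simp only [LinearMap.comp_apply, LinearMap.neg_apply]
    rw [swapC1_single, bdry1_single, bdry1_single]
    simp only [smul_sub]
    abel
  exact DFunLike.congr_fun h c

lemma support_swapC1 {c : C1 V} {t : V × V} (ht : t ∈ (swapC1 V c).support) :
    (t.2, t.1) ∈ c.support := by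
  have : swapC1 V c t ≠ 0 := Finsupp.mem_support_iff.mp ht
  rw [swapC1_apply] at this
  exact Finsupp.mem_support_iff.mpr this

/-! ### Reversed walks -/

lemma walkChain_reverse {x y : V} (p : G.Walk x y) :
    walkChain G p.reverse = swapC1 V (walkChain G p) := by
  induction p with
  | nil => simp
  | @cons u v w h q ih =>
    rw [Walk.reverse_cons, walkChain_append, ih, walkChain_cons, walkChain_cons,
      walkChain_nil, map_add, swapC1_single]
    abel

/-! ### Evaluating `bdry1` -/

lemma bdry1_apply [DecidableEq V] (c : C1 V) (v : V) :
    bdry1 c v = (c.support.sum fun t => if t.2 = v then c t else 0)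
      - (c.support.sum fun t => if t.1 = v then c t else 0) := by
  rw [bdry1, Finsupp.lsum_apply, Finsupp.sum, Finsupp.finset_sum_apply,
    ← Finset.sum_sub_distrib]
  refine Finset.sum_congr rfl fun t _ => ?_
  rw [LinearMap.toSpanSingleton_apply, Finsupp.smul_apply, Finsupp.sub_apply]
  by_cases h2 : t.2 = v <;> by_cases h1 : t.1 = v <;>
    simp [Finsupp.single_apply, h1, h2]

/-! ### Filling the symmetric part -/

lemma fill_symmetric (hconn : G.Connected) (S : C1 V)
    (hadj : ∀ t ∈ S.support, G.Adj t.1 t.2) (hsym : swapC1 V S = S) {R : ℕ} (hR : 1 ≤ R) :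
    ∃ a : C2 V, memC2R G R a ∧ bdry2 a = S ∧ l1 a ≤ l1 S := by
  classical
  refine ⟨S.support.sum fun t => (S t / 2) •
    (single (t.1, t.2, t.1) 1 + single (t.1, t.1, t.1) 1), ?_, ?_, ?_⟩
  · refine memC2R_finsetsum _ _ fun t ht => memC2R_smul _ (memC2R_add ?_ ?_)
    · have hd := adj_dist_le (hadj t ht)
      have hd' : G.dist t.2 t.1 ≤ 1 := by rw [SimpleGraph.dist_comm]; exact hd
      exact memC2R_single (pairOK_of_dist hconn (hd.trans hR))
        (pairOK_of_dist hconn (by simp [SimpleGraph.dist_self]))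
        (pairOK_of_dist hconn (hd'.trans hR))
    · exact memC2R_single (pairOK_of_dist hconn (by simp [SimpleGraph.dist_self]))
        (pairOK_of_dist hconn (by simp [SimpleGraph.dist_self]))
        (pairOK_of_dist hconn (by simp [SimpleGraph.dist_self]))
  · rw [map_sum]
    have hterm : ∀ t : V × V, bdry2 ((S t / 2) •
        (single (t.1, t.2, t.1) 1 + single (t.1, t.1, t.1) 1 : C2 V))
        = (S t / 2) • (single t 1 + single (t.2, t.1) 1 : C1 V) := by
      intro t
      rw [map_smul, map_add, bdry2_single, bdry2_single]
      simp only [one_smul]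
      congr 1
      abel
    calc (S.support.sum fun t => bdry2 ((S t / 2) •
          (single (t.1, t.2, t.1) 1 + single (t.1, t.1, t.1) 1 : C2 V)))
        = S.support.sum fun t => (S t / 2) • (single t 1 + single (t.2, t.1) 1 : C1 V) :=
          Finset.sum_congr rfl fun t _ => hterm t
      _ = (2⁻¹ : ℝ) • (S.support.sum fun t =>
            (single t (S t) + single (t.2, t.1) (S t) : C1 V)) := by
          rw [Finset.smul_sum]
          refine Finset.sum_congr rfl fun t _ => ?_
          rw [smul_add, smul_add, Finsupp.smul_single, Finsupp.smul_single,
            Finsupp.smul_single, Finsupp.smul_single]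
          congr 2 <;> · simp only [smul_eq_mul, mul_one]; ring
      _ = (2⁻¹ : ℝ) • (S + swapC1 V S) := by
          congr 1
          have h1 : S.support.sum (fun t => single t (S t)) = S := Finsupp.sum_single S
          have h2 : (S.support.sum fun t => (single (t.2, t.1) (S t) : C1 V))
              = swapC1 V S := by
            rw [swapC1, Finsupp.lmapDomain_apply, Finsupp.mapDomain]
            rfl
          rw [Finset.sum_add_distrib, h1, h2]
      _ = S := by rw [hsym, ← two_smul ℝ S, smul_smul]; norm_num
  · refine (l1_finsetsum_le _ _).trans ?_
    have : ∀ t ∈ S.support, l1 ((S t / 2) •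
        (single (t.1, t.2, t.1) 1 + single (t.1, t.1, t.1) 1 : C2 V)) ≤ |S t| := by
      intro t _
      rw [l1_smul]
      have h1 : l1 (single (t.1, t.2, t.1) 1 + single (t.1, t.1, t.1) 1 : C2 V) ≤ 2 := by
        refine (l1_add_le _ _).trans ?_
        have ha := l1_single_le ((t.1, t.2, t.1) : V × V × V) (1:ℝ)
        have hb := l1_single_le ((t.1, t.1, t.1) : V × V × V) (1:ℝ)
        simp only [abs_one] at ha hb
        linarith
      have h2 : |S t / 2| = |S t| / 2 := by rw [abs_div]; simp
      rw [h2]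
      nlinarith [abs_nonneg (S t), l1_nonneg (single (t.1, t.2, t.1) 1 + single (t.1, t.1, t.1) 1 : C2 V)]
    exact (Finset.sum_le_sum this).trans (le_of_eq rfl)

end HypH2
namespace HypH2

open Finsupp SimpleGraph

variable {V : Type*} {G : SimpleGraph V}

/-! ### Walks along a vertex sequence -/

def mkwalk (u : ℕ → V) (hadj : ∀ i, G.Adj (u i) (u (i+1))) (s : ℕ) :
    (m : ℕ) → G.Walk (u s) (u (s+m))
  | 0 => SimpleGraph.Walk.nil
  | (m+1) => (mkwalk u hadj s m).append (SimpleGraph.Walk.cons (hadj (s+m)) SimpleGraph.Walk.nil)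

lemma mkwalk_length (u : ℕ → V) (hadj : ∀ i, G.Adj (u i) (u (i+1))) (s m : ℕ) :
    (mkwalk (G := G) u hadj s m).length = m := by
  induction m with
  | zero => rfl
  | succ m ih => simp [mkwalk, Walk.length_append, ih]

lemma mkwalk_chain (u : ℕ → V) (hadj : ∀ i, G.Adj (u i) (u (i+1))) (s m : ℕ) :
    walkChain G (mkwalk (G := G) u hadj s m)
      = (Finset.Ico s (s+m)).sum fun i => single (u i, u (i+1)) (1:ℝ) := by
  induction m with
  | zero => simp [mkwalk]
  | succ m ih =>
    have h1 : s + (m+1) = (s+m) + 1 := rfl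
    rw [mkwalk, walkChain_append, ih, walkChain_cons, walkChain_nil, h1,
      Finset.sum_Ico_succ_top (by omega)]
    abel

/-! ### Flow sequence -/

def flowSeq (N : C1 V) (t₀ : {p : V × V // 0 < N p})
    (step : ∀ p : V × V, 0 < N p → {w : V // 0 < N (p.2, w)}) :
    ℕ → {p : V × V // 0 < N p}
  | 0 => t₀
  | (n+1) =>
    ⟨((flowSeq N t₀ step n).1.2, (step (flowSeq N t₀ step n).1 (flowSeq N t₀ step n).2).1),
      (step (flowSeq N t₀ step n).1 (flowSeq N t₀ step n).2).2⟩

lemma flowSeq_succ_fst (N : C1 V) (t₀ : {p : V × V // 0 < N p})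
    (step : ∀ p : V × V, 0 < N p → {w : V // 0 < N (p.2, w)}) (n : ℕ) :
    (flowSeq N t₀ step (n+1)).1.1 = (flowSeq N t₀ step n).1.2 := rfl

/-! ### Flow conservation -/

lemma exists_pos_out [DecidableEq V] {N : C1 V} (hanti : swapC1 V N = -N)
    (hcyc : bdry1 N = 0) {u v : V} (huv : 0 < N (u, v)) : ∃ w, 0 < N (v, w) := by
  have hNs : ∀ s : V × V, N (s.2, s.1) = -N s := by
    intro s
    have h := DFunLike.congr_fun hanti s
    rw [swapC1_apply] at h
    simpa using h
  have h0 : bdry1 N v = 0 := by rw [hcyc]; rfl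
  rw [bdry1_apply] at h0
  -- inS = - outS by the swap reindexing
  have hre : (N.support.sum fun t => if t.2 = v then N t else 0)
      = - (N.support.sum fun t => if t.1 = v then N t else 0) := by
    rw [← Finset.sum_neg_distrib]
    refine Finset.sum_bij' (fun t _ => (t.2, t.1)) (fun t _ => (t.2, t.1)) ?_ ?_ ?_ ?_ ?_
    · intro t ht
      refine Finsupp.mem_support_iff.mpr ?_
      rw [hNs t]
      simpa using Finsupp.mem_support_iff.mp ht
    · intro t ht
      refine Finsupp.mem_support_iff.mpr ?_
      rw [hNs t]
      simpa using Finsupp.mem_support_iff.mp ht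
    · intro t _; rfl
    · intro t _; rfl
    · intro t _
      simp only
      rw [hNs t]
      by_cases h : t.2 = v <;> simp [h]
  have hout : (N.support.sum fun t => if t.1 = v then N t else 0) = 0 := by linarith
  by_contra hcon
  push_neg at hcon
  have hmem : ((v, u) : V × V) ∈ N.support := by
    refine Finsupp.mem_support_iff.mpr ?_
    have h1 : N (v, u) = - N (u, v) := hNs (u, v)
    rw [h1]
    simpa using ne_of_gt huv
  have hlt : (N.support.sum fun t => if t.1 = v then N t else 0) < 0 := by
    have hmain := Finset.sum_lt_sum (s := N.support)
      (f := fun t : V × V => if t.1 = v then N t else 0) (g := fun _ => (0:ℝ))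
      (by
        intro t _
        by_cases h : t.1 = v
        · simp only [h, if_true]
          have h3 : N (v, t.2) ≤ 0 := hcon t.2
          have h4 : N t = N (v, t.2) := by rw [← h]
          rw [h4]; exact h3
        · simp [h])
      ⟨(v, u), hmem, by
        have h1 : N (v, u) = - N (u, v) := hNs (u, v)
        have h6 : (if ((v, u) : V × V).1 = v then N (v, u) else 0) < 0 := by
          rw [if_pos rfl, h1]
          linarith
        exact h6⟩
    simpa using hmain
  linarith

end HypH2
namespace HypH2

open Finsupp SimpleGraph

variable {V : Type*} {G : SimpleGraph V}

lemma netfill (hconn : G.Connected) {δ : ℕ} (hslim : SlimTriangles G δ) :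
    ∀ k : ℕ, ∀ N : C1 V, N.support.card ≤ k →
    (∀ t ∈ N.support, G.Adj t.1 t.2) → swapC1 V N = -N → bdry1 N = 0 →
    ∃ a : C2 V, memC2R G (8*δ+8) a ∧ bdry2 a = N ∧ l1 a ≤ (16*δ+17) * l1 N := by
  classical
  intro k
  induction k with
  | zero =>
    intro N hcard _ _ _
    have h1 : N = 0 :=
      Finsupp.support_eq_empty.mp (Finset.card_eq_zero.mp (Nat.le_zero.mp hcard))
    subst h1
    exact ⟨0, memC2R_zero, by simp, by simp⟩
  | succ k ih =>
    intro N hcard hadj hanti hcyc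
    by_cases hN0 : N = 0
    · subst hN0; exact ⟨0, memC2R_zero, by simp, by simp⟩
    have hNs : ∀ s : V × V, N (s.2, s.1) = -N s := by
      intro s
      have h := DFunLike.congr_fun hanti s
      rw [swapC1_apply] at h
      simpa using h
    obtain ⟨t₀, ht₀⟩ : ∃ t : V × V, 0 < N t := by
      obtain ⟨t, ht⟩ := Finsupp.ne_iff.mp hN0
      simp only [Finsupp.coe_zero, Pi.zero_apply] at ht
      rcases lt_or_gt_of_ne ht with h | h
      · exact ⟨(t.2, t.1), by rw [hNs t]; linarith⟩
      · exact ⟨t, h⟩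
    have step : ∀ p : V × V, 0 < N p → {w : V // 0 < N (p.2, w)} := fun p hp =>
      ⟨Classical.choose (exists_pos_out hanti hcyc hp),
        Classical.choose_spec (exists_pos_out hanti hcyc hp)⟩
    set F := flowSeq N ⟨t₀, ht₀⟩ step with hF
    set u : ℕ → V := fun n => (F n).1.1 with hu
    have hFpair : ∀ n, (F n).1 = (u n, u (n+1)) := by
      intro n
      have h1 : (F (n+1)).1.1 = (F n).1.2 := rfl
      exact Prod.ext rfl h1.symm
    have hupos : ∀ n, 0 < N (u n, u (n+1)) := fun n => by
      have h := (F n).2; rwa [hFpair n] at h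
    have humem : ∀ n, (u n, u (n+1)) ∈ N.support :=
      fun n => Finsupp.mem_support_iff.mpr (ne_of_gt (hupos n))
    have huadj : ∀ n, G.Adj (u n) (u (n+1)) := fun n => hadj _ (humem n)
    -- pigeonhole : a repeated vertex
    have hexrep : ∃ l : ℕ, ∃ j, j < l ∧ u j = u l := by
      obtain ⟨a, _, b, _, hne, heq⟩ :=
        Finset.exists_ne_map_eq_of_card_lt_of_maps_to
          (s := Finset.range ((N.support.image Prod.fst).card + 1))
          (t := N.support.image Prod.fst) (by simp)
          (fun n _ => Finset.mem_image.mpr ⟨(u n, u (n+1)), humem n, rfl⟩)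
      rcases Nat.lt_or_ge a b with h | h
      · exact ⟨b, a, h, heq⟩
      · exact ⟨a, b, by omega, heq.symm⟩
    obtain ⟨k0, hk0l, huk0l⟩ := Nat.find_spec hexrep
    set l := Nat.find hexrep with hl
    have huinj : ∀ i j, i < j → j < l → u i ≠ u j := by
      intro i j hij hjl heq
      exact Nat.find_min hexrep hjl ⟨i, hij, heq⟩
    set m := l - k0 with hm
    have hm1 : 1 ≤ m := by omega
    set I := Finset.Ico k0 l with hI
    have hmemI : ∀ i, i ∈ I ↔ (k0 ≤ i ∧ i < l) := fun i => Finset.mem_Ico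
    have hIne : I.Nonempty := ⟨k0, (hmemI k0).mpr ⟨le_rfl, hk0l⟩⟩
    have hcardI : I.card = m := by rw [hI, Nat.card_Ico]
    set e : ℕ → V × V := fun i => (u i, u (i+1)) with he
    have heinj : ∀ i ∈ I, ∀ j ∈ I, e i = e j → i = j := by
      intro i hi j hj hij
      rw [hmemI] at hi hj
      by_contra hne
      rcases Nat.lt_or_ge i j with h | h
      · exact huinj i j h (by omega) (congrArg Prod.fst hij)
      · exact huinj j i (by omega) (by omega) (congrArg Prod.fst hij).symm
    have hesinj : ∀ i ∈ I, ∀ j ∈ I, (u (i+1), u i) = (u (j+1), u j) → i = j := by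
      intro i hi j hj hij
      rw [hmemI] at hi hj
      by_contra hne
      rcases Nat.lt_or_ge i j with h | h
      · exact huinj i j h (by omega) (congrArg Prod.snd hij)
      · exact huinj j i (by omega) (by omega) (congrArg Prod.snd hij).symm
    set Ecyc := I.image e with hEcyc
    set Eswap := I.image (fun i => (u (i+1), u i)) with hEswap
    have hEcycpos : ∀ t ∈ Ecyc, 0 < N t := by
      intro t ht
      obtain ⟨i, _, rfl⟩ := Finset.mem_image.mp ht
      exact hupos i
    have hEswapneg : ∀ t ∈ Eswap, N t < 0 := by
      intro t ht
      obtain ⟨i, _, rfl⟩ := Finset.mem_image.mp ht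
      have h : N (u (i+1), u i) = - N (u i, u (i+1)) := hNs (u i, u (i+1))
      have h2 := hupos i
      simpa [h] using h2
    have hEcycsub : Ecyc ⊆ N.support := fun t ht =>
      Finsupp.mem_support_iff.mpr (ne_of_gt (hEcycpos t ht))
    have hEswapsub : Eswap ⊆ N.support := fun t ht =>
      Finsupp.mem_support_iff.mpr (ne_of_lt (hEswapneg t ht))
    have hdisj : ∀ t, t ∈ Ecyc → t ∈ Eswap → False := fun t h1 h2 =>
      absurd (hEcycpos t h1) (not_lt.mpr (le_of_lt (hEswapneg t h2)))
    -- epsilon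
    have hεsne : (I.image fun i => N (e i)).Nonempty := hIne.image _
    set ε := (I.image fun i => N (e i)).min' hεsne with hε
    obtain ⟨i₀, hi₀I, hi₀⟩ : ∃ i ∈ I, N (e i) = ε :=
      Finset.mem_image.mp ((I.image fun i => N (e i)).min'_mem hεsne)
    have hεpos : 0 < ε := hi₀ ▸ hupos i₀
    have hεle : ∀ i ∈ I, ε ≤ N (e i) := fun i hi =>
      Finset.min'_le _ _ (Finset.mem_image.mpr ⟨i, hi, rfl⟩)
    -- the chain of the cycle
    set χ := I.sum fun i => (single (e i) (1:ℝ) : C1 V) with hχ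
    have hswapχ : swapC1 V χ = I.sum fun i => (single (u (i+1), u i) (1:ℝ) : C1 V) := by
      rw [hχ, map_sum]
      exact Finset.sum_congr rfl fun i _ => swapC1_single _ _
    set Δ := χ - swapC1 V χ with hΔ
    have hΔapp : ∀ t : V × V,
        Δ t = (if t ∈ Ecyc then 1 else 0) - (if t ∈ Eswap then 1 else 0) := by
      intro t
      rw [hΔ, Finsupp.sub_apply]
      congr 1
      · rw [hχ, Finsupp.finset_sum_apply]
        calc (I.sum fun i => (single (e i) (1:ℝ) : C1 V) t)
            = I.sum fun i => if e i = t then (1:ℝ) else 0 :=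
              Finset.sum_congr rfl fun i _ => Finsupp.single_apply
          _ = Ecyc.sum fun b => if b = t then (1:ℝ) else 0 := by
              rw [hEcyc]
              exact (Finset.sum_image (f := fun b => if b = t then (1:ℝ) else 0)
                (g := e) heinj).symm
          _ = if t ∈ Ecyc then (1:ℝ) else 0 := by rw [Finset.sum_ite_eq' Ecyc t fun _ => (1:ℝ)]
      · rw [hswapχ, Finsupp.finset_sum_apply]
        calc (I.sum fun i => (single (u (i+1), u i) (1:ℝ) : C1 V) t)
            = I.sum fun i => if (u (i+1), u i) = t then (1:ℝ) else 0 :=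
              Finset.sum_congr rfl fun i _ => Finsupp.single_apply
          _ = Eswap.sum fun b => if b = t then (1:ℝ) else 0 := by
              rw [hEswap]
              exact (Finset.sum_image (f := fun b => if b = t then (1:ℝ) else 0)
                (g := fun i => (u (i+1), u i)) hesinj).symm
          _ = if t ∈ Eswap then (1:ℝ) else 0 := by
              rw [Finset.sum_ite_eq' Eswap t fun _ => (1:ℝ)]
    have hsuppΔ : ∀ t, t ∉ N.support → Δ t = 0 := by
      intro t ht
      rw [hΔapp, if_neg (fun h => ht (hEcycsub h)), if_neg (fun h => ht (hEswapsub h))]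
      ring
    set N' := N - ε • Δ with hN'
    have hN'app : ∀ t, N' t = N t - ε * Δ t := by
      intro t
      rw [hN', Finsupp.sub_apply, Finsupp.smul_apply, smul_eq_mul]
    have hsupp' : N'.support ⊆ N.support := by
      intro t ht
      by_contra h
      refine Finsupp.mem_support_iff.mp ht ?_
      rw [hN'app, hsuppΔ t h, Finsupp.notMem_support_iff.mp h]
      ring
    have hpt : ∀ t ∈ N.support, |N' t|
        = |N t| - ε * ((if t ∈ Ecyc then 1 else 0) + (if t ∈ Eswap then 1 else 0)) := by
      intro t htm
      rw [hN'app, hΔapp]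
      by_cases h1 : t ∈ Ecyc
      · have h2 : t ∉ Eswap := fun h => hdisj t h1 h
        obtain ⟨i, hiI, hie⟩ := Finset.mem_image.mp h1
        have hge : ε ≤ N t := hie ▸ hεle i hiI
        rw [if_pos h1, if_neg h2]
        have hNt : |N t| = N t := abs_of_pos (lt_of_lt_of_le hεpos hge)
        rw [abs_of_nonneg (by linarith), hNt]
        ring
      · by_cases h2 : t ∈ Eswap
        · obtain ⟨i, hiI, hie⟩ := Finset.mem_image.mp h2
          have hval : N t = - N (e i) := by
            rw [← hie]
            exact hNs (e i)
          have hle : N t ≤ -ε := by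
            have := hεle i hiI
            rw [hval]; linarith
          rw [if_neg h1, if_pos h2]
          have hNt : |N t| = - N t := abs_of_neg (by linarith)
          rw [abs_of_nonpos (by linarith), hNt]
          ring
        · rw [if_neg h1, if_neg h2]
          ring_nf
    have hcards : (Ecyc.card : ℝ) = m ∧ (Eswap.card : ℝ) = m := by
      constructor
      · rw [Finset.card_image_of_injOn (fun i hi j hj => heinj i hi j hj), hcardI]
      · rw [Finset.card_image_of_injOn (fun i hi j hj => hesinj i hi j hj), hcardI]
    have hl1N' : l1 N' = l1 N - ε * (2 * m) := by
      rw [l1_eq_sum_subset hsupp']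
      calc (N.support.sum fun t => |N' t|)
          = N.support.sum fun t => |N t|
              - ε * ((if t ∈ Ecyc then 1 else 0) + (if t ∈ Eswap then 1 else 0)) :=
            Finset.sum_congr rfl hpt
        _ = l1 N - ε * ((N.support.sum fun t => if t ∈ Ecyc then (1:ℝ) else 0)
              + (N.support.sum fun t => if t ∈ Eswap then (1:ℝ) else 0)) := by
            rw [Finset.sum_sub_distrib, ← Finset.mul_sum, ← Finset.sum_add_distrib]
            rfl
        _ = l1 N - ε * (2 * m) := by
            have he1 : (N.support.sum fun t => if t ∈ Ecyc then (1:ℝ) else 0)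
                = Ecyc.card := by
              rw [Finset.sum_ite_mem, Finset.inter_eq_right.mpr hEcycsub]
              simp
            have he2 : (N.support.sum fun t => if t ∈ Eswap then (1:ℝ) else 0)
                = Eswap.card := by
              rw [Finset.sum_ite_mem, Finset.inter_eq_right.mpr hEswapsub]
              simp
            rw [he1, he2, hcards.1, hcards.2]
            ring
    -- the closed walk along the cycle
    have hend : u (k0 + m) = u k0 := by
      have : k0 + m = l := by omega
      rw [this, ← huk0l]
    set cw := (mkwalk u huadj k0 m).copy rfl hend with hcw
    have hcwlen : cw.length = m := by rw [hcw, Walk.length_copy, mkwalk_length]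
    have hcwchain : walkChain G cw = χ := by
      rw [hcw, walkChain_copy, mkwalk_chain, hχ]
      have hkm : k0 + m = l := by omega
      rw [hkm, ← hI]
    obtain ⟨aw, hawmem, hawb, hawl1⟩ := walkfill hconn hslim cw.length cw le_rfl
    rw [hcwchain] at hawb
    rw [hcwlen] at hawl1
    -- induction hypothesis on N'
    have hanti' : swapC1 V N' = -N' := by
      rw [hN', map_sub, map_smul, hanti, hΔ, map_sub, swapC1_swapC1]
      rw [smul_sub, smul_sub]
      abel
    have hcyc' : bdry1 N' = 0 := by
      have hbχ : bdry1 χ = 0 := by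
        rw [← hcwchain, bdry1_walkChain]
        exact sub_self _
      rw [hN', map_sub, hcyc, map_smul, hΔ, map_sub, bdry1_swapC1, hbχ]
      simp
    have hN'i₀ : N' (e i₀) = 0 := by
      rw [hN'app, hΔapp, if_pos (Finset.mem_image.mpr ⟨i₀, hi₀I, rfl⟩),
        if_neg (fun h => hdisj (e i₀) (Finset.mem_image.mpr ⟨i₀, hi₀I, rfl⟩) h), hi₀]
      ring
    have hcard' : N'.support.card ≤ k := by
      have hsub2 : N'.support ⊆ N.support.erase (e i₀) := by
        intro t ht
        refine Finset.mem_erase.mpr ⟨?_, hsupp' ht⟩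
        rintro rfl
        exact (Finsupp.mem_support_iff.mp ht) hN'i₀
      have h3 := Finset.card_le_card hsub2
      have h4 : (N.support.erase (e i₀)).card = N.support.card - 1 :=
        Finset.card_erase_of_mem (hEcycsub (Finset.mem_image.mpr ⟨i₀, hi₀I, rfl⟩))
      have h5 : 1 ≤ N.support.card := by
        refine Finset.card_pos.mpr ⟨(e i₀), hEcycsub (Finset.mem_image.mpr ⟨i₀, hi₀I, rfl⟩)⟩
      omega
    have hadj' : ∀ t ∈ N'.support, G.Adj t.1 t.2 := fun t ht => hadj t (hsupp' ht)
    obtain ⟨a', ha'mem, ha'b, ha'l1⟩ := ih N' hcard' hadj' hanti' hcyc'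
    -- symmetric filler of the cycle walk
    have hsymb : bdry2 (symFill cw) = χ + swapC1 V χ := by
      rw [bdry2_symFill, hcwchain, walkChain_reverse, hcwchain]
    -- assemble
    refine ⟨a' + ((2*ε) • aw - ε • symFill cw), ?_, ?_, ?_⟩
    · exact memC2R_add ha'mem (memC2R_sub (memC2R_smul _ hawmem)
        (memC2R_smul _ (memC2R_symFill hconn cw (by omega))))
    · rw [map_add, map_sub, map_smul, map_smul, ha'b, hawb, hsymb, hN', hΔ]
      have hmod : (2*ε) • χ - ε • (χ + swapC1 V χ) = ε • (χ - swapC1 V χ) := by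
        rw [smul_add, smul_sub, two_mul, add_smul]
        abel
      rw [hmod]
      abel
    · have hb1 : l1 (a' + ((2*ε) • aw - ε • symFill cw))
          ≤ l1 a' + (l1 ((2*ε) • aw) + l1 (ε • symFill cw)) := by
        refine (l1_add_le _ _).trans ?_
        have := l1_sub_le ((2*ε) • aw) (ε • symFill cw)
        linarith
      have hb2 : l1 ((2*ε) • aw) ≤ 2*ε*((16*(δ:ℝ)+16) * (m:ℝ)) := by
        rw [l1_smul, abs_of_pos (by linarith : (0:ℝ) < 2*ε)]
        refine mul_le_mul_of_nonneg_left ?_ (by linarith : (0:ℝ) ≤ 2*ε)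
        exact_mod_cast hawl1
      have hb3 : l1 (ε • symFill cw) ≤ ε * (2 * m) := by
        rw [l1_smul, abs_of_pos hεpos]
        refine mul_le_mul_of_nonneg_left ?_ (le_of_lt hεpos)
        have := l1_symFill_le cw
        rw [hcwlen] at this
        exact_mod_cast this
      have hb4 : l1 a' ≤ (16*(δ:ℝ)+17) * (l1 N - ε * (2*(m:ℝ))) := by
        rw [← hl1N']
        exact_mod_cast ha'l1
      calc l1 (a' + ((2*ε) • aw - ε • symFill cw))
          ≤ l1 a' + (l1 ((2*ε) • aw) + l1 (ε • symFill cw)) := hb1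
        _ ≤ (16*(δ:ℝ)+17) * (l1 N - ε * (2*(m:ℝ)))
            + (2*ε*((16*(δ:ℝ)+16) * (m:ℝ)) + ε * (2 * (m:ℝ))) := by linarith
        _ = (16*(δ:ℝ)+17) * l1 N := by ring

end HypH2
namespace HypH2

open Finsupp SimpleGraph

variable {V : Type*} {G : SimpleGraph V}

/-- Linear isoperimetric filling of arbitrary real cellular 1-cycles. -/
lemma isofill (hconn : G.Connected) {δ : ℕ} (hslim : SlimTriangles G δ)
    (z : C1 V) (hadj : ∀ t ∈ z.support, G.Adj t.1 t.2) (hcyc : bdry1 z = 0) :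
    ∃ a : C2 V, memC2R G (8*δ+8) a ∧ bdry2 a = z ∧ l1 a ≤ (16*(δ:ℝ)+18) * l1 z := by
  classical
  set S := (2⁻¹ : ℝ) • (z + swapC1 V z) with hS
  set N := (2⁻¹ : ℝ) • (z - swapC1 V z) with hN
  have hzNS : z = N + S := by
    rw [hN, hS, ← smul_add]
    have h1 : (z - swapC1 V z) + (z + swapC1 V z) = (2:ℝ) • z := by
      rw [two_smul]; abel
    rw [h1, smul_smul]
    norm_num
  have hadjswap : ∀ t ∈ (swapC1 V z).support, G.Adj t.1 t.2 := by
    intro t ht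
    exact (hadj _ (support_swapC1 ht)).symm
  have hmix : ∀ (r : ℝ) (c : C1 V), c = z + swapC1 V z ∨ c = z - swapC1 V z →
      ∀ t ∈ (r • c).support, G.Adj t.1 t.2 := by
    intro r c hc t ht
    have h1 : t ∈ c.support := Finsupp.support_smul ht
    rcases hc with rfl | rfl
    · rcases Finset.mem_union.mp (Finsupp.support_add h1) with h | h
      · exact hadj t h
      · exact hadjswap t h
    · rw [sub_eq_add_neg] at h1
      rcases Finset.mem_union.mp (Finsupp.support_add h1) with h | h
      · exact hadj t h
      · rw [Finsupp.support_neg] at h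
        exact hadjswap t h
  have hadjS : ∀ t ∈ S.support, G.Adj t.1 t.2 := hmix _ _ (Or.inl rfl)
  have hadjN : ∀ t ∈ N.support, G.Adj t.1 t.2 := hmix _ _ (Or.inr rfl)
  have hsymS : swapC1 V S = S := by
    rw [hS, map_smul, map_add, swapC1_swapC1, add_comm]
  have hantiN : swapC1 V N = -N := by
    rw [hN, map_smul, map_sub, swapC1_swapC1, ← smul_neg]
    congr 1
    abel
  have hcycN : bdry1 N = 0 := by
    rw [hN, map_smul, map_sub, bdry1_swapC1, hcyc]
    simp
  obtain ⟨aN, h1, h2, h3⟩ := netfill hconn hslim N.support.card N le_rfl hadjN hantiN hcycN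
  obtain ⟨aS, h4, h5, h6⟩ := fill_symmetric hconn S hadjS hsymS (R := 8*δ+8) (by omega)
  have hlswap := l1_swapC1 z
  have hlN : l1 N ≤ l1 z := by
    rw [hN, l1_smul]
    have h7 := l1_sub_le z (swapC1 V z)
    have h8 : |(2⁻¹:ℝ)| = 2⁻¹ := by norm_num
    rw [h8]
    linarith
  have hlS : l1 S ≤ l1 z := by
    rw [hS, l1_smul]
    have h7 := l1_add_le z (swapC1 V z)
    have h8 : |(2⁻¹:ℝ)| = 2⁻¹ := by norm_num
    rw [h8]
    linarith
  refine ⟨aN + aS, memC2R_add h1 h4, by rw [map_add, h2, h5, ← hzNS], ?_⟩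
  have h9 : (0:ℝ) ≤ 16*(δ:ℝ)+17 := by positivity
  have h10 : (16*(δ:ℝ)+17) * l1 N ≤ (16*(δ:ℝ)+17) * l1 z := mul_le_mul_of_nonneg_left hlN h9
  calc l1 (aN + aS) ≤ l1 aN + l1 aS := l1_add_le _ _
    _ ≤ (16*(δ:ℝ)+17) * l1 z + l1 z := by
        have hcast : (16*(δ:ℝ)+17) * l1 N = ((16*δ+17 : ℕ) : ℝ) * l1 N := by push_cast; ring
        push_cast at h3
        linarith
    _ = (16*(δ:ℝ)+18) * l1 z := by ring

/-! ### Cone operators -/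

noncomputable def coneOp0 (v₀ : V) : C0 V →ₗ[ℝ] C1 V :=
  Finsupp.lsum ℝ fun t => LinearMap.toSpanSingleton ℝ (C1 V) (single (v₀, t) 1)

noncomputable def coneOp (v₀ : V) : C1 V →ₗ[ℝ] C2 V :=
  Finsupp.lsum ℝ fun t => LinearMap.toSpanSingleton ℝ (C2 V) (single (v₀, t.1, t.2) 1)

noncomputable def coneOp2 (v₀ : V) : C2 V →ₗ[ℝ] C3 V :=
  Finsupp.lsum ℝ fun t => LinearMap.toSpanSingleton ℝ (C3 V) (single (v₀, t.1, t.2.1, t.2.2) 1)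

lemma cone_homotopy1 (v₀ : V) :
    (bdry2 (V := V)).comp (coneOp v₀) + (coneOp0 v₀).comp bdry1 = LinearMap.id := by
  refine Finsupp.lhom_ext fun t r => ?_
  simp only [LinearMap.add_apply, LinearMap.comp_apply, LinearMap.id_apply]
  rw [coneOp, Finsupp.lsum_single, LinearMap.toSpanSingleton_apply, map_smul, bdry2_single,
    bdry1_single, map_smul, map_sub, coneOp0, Finsupp.lsum_single, Finsupp.lsum_single,
    LinearMap.toSpanSingleton_apply, LinearMap.toSpanSingleton_apply]
  rw [← smul_add]
  have hsr : single t r = r • (single t 1 : C1 V) := by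
    rw [Finsupp.smul_single, smul_eq_mul, mul_one]
  rw [hsr]
  congr 1
  simp only [one_smul]
  abel

lemma cone_homotopy2 (v₀ : V) :
    (bdry3 (V := V)).comp (coneOp2 v₀) + (coneOp v₀).comp bdry2 = LinearMap.id := by
  refine Finsupp.lhom_ext fun t r => ?_
  simp only [LinearMap.add_apply, LinearMap.comp_apply, LinearMap.id_apply]
  rw [coneOp2, Finsupp.lsum_single, LinearMap.toSpanSingleton_apply, map_smul, bdry3_single,
    bdry2_single, map_smul]
  rw [map_add, map_sub, coneOp, Finsupp.lsum_single, Finsupp.lsum_single, Finsupp.lsum_single,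
    LinearMap.toSpanSingleton_apply, LinearMap.toSpanSingleton_apply,
    LinearMap.toSpanSingleton_apply]
  rw [← smul_add]
  have hsr : single t r = r • (single t 1 : C2 V) := by
    rw [Finsupp.smul_single, smul_eq_mul, mul_one]
  rw [hsr]
  congr 1
  simp only [one_smul]
  abel

lemma bdry1_bdry2 : (bdry1 (V := V)).comp bdry2 = 0 := by
  refine Finsupp.lhom_ext fun t r => ?_
  simp only [LinearMap.comp_apply, LinearMap.zero_apply]
  rw [bdry2_single, map_smul, map_add, map_sub, bdry1_single, bdry1_single, bdry1_single]
  simp only [one_smul]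
  rw [show ((single t.2.2 1 - single t.2.1 1) - (single t.2.2 1 - single t.1 1)
    + (single t.2.1 1 - single t.1 1) : C0 V) = 0 by abel]
  simp

end HypH2
namespace HypH2

open Finsupp SimpleGraph

variable {V : Type*} {G : SimpleGraph V}
variable {W : Type*} [NormedAddCommGroup W] [NormedSpace ℝ W]

/-! ### Cocycles vanish on fillings -/

lemma f_vanish_ker (f : C2 V →ₗ[ℝ] W) (hf : ∀ a : C3 V, f (bdry3 a) = 0) (v₀ : V)
    {c : C2 V} (hc : bdry2 c = 0) : f c = 0 := by
  have h := DFunLike.congr_fun (cone_homotopy2 (V := V) v₀) c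
  simp only [LinearMap.add_apply, LinearMap.comp_apply, LinearMap.id_apply] at h
  rw [hc, map_zero, add_zero] at h
  rw [← h]
  exact hf _

lemma bdry2_coneOp_of_cycle (v₀ : V) {b : C1 V} (hb : bdry1 b = 0) :
    bdry2 (coneOp v₀ b) = b := by
  have h := DFunLike.congr_fun (cone_homotopy1 (V := V) v₀) b
  simp only [LinearMap.add_apply, LinearMap.comp_apply, LinearMap.id_apply] at h
  rwa [hb, map_zero, add_zero] at h

lemma fill_indep (f : C2 V →ₗ[ℝ] W) (hf : ∀ a : C3 V, f (bdry3 a) = 0) (v₀ : V)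
    {b : C1 V} {a : C2 V} (ha : bdry2 a = b) (hb0 : bdry1 b = 0) :
    f a = f (coneOp v₀ b) := by
  have h2 : bdry2 (a - coneOp v₀ b) = 0 := by
    rw [map_sub, ha, bdry2_coneOp_of_cycle v₀ hb0, sub_self]
  have h3 := f_vanish_ker f hf v₀ h2
  rw [map_sub] at h3
  exact sub_eq_zero.mp h3

/-! ### The optimal bound on each scale -/

noncomputable def MfStar (G : SimpleGraph V) (f : C2 V →ₗ[ℝ] W) (R : ℕ) : ℝ :=
  sInf {M : ℝ | 0 ≤ M ∧ ∀ c : C2 V, memC2R G R c → ‖f c‖ ≤ M * l1 c}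

lemma MfStar_set_nonempty {f : C2 V →ₗ[ℝ] W} (hf : Bdd2 G f) (R : ℕ) :
    {M : ℝ | 0 ≤ M ∧ ∀ c : C2 V, memC2R G R c → ‖f c‖ ≤ M * l1 c}.Nonempty := by
  obtain ⟨M, hM⟩ := hf R
  refine ⟨max M 0, le_max_right _ _, fun c hc => ?_⟩
  exact (hM c hc).trans (mul_le_mul_of_nonneg_right (le_max_left _ _) (l1_nonneg c))

lemma MfStar_bddBelow (G : SimpleGraph V) (f : C2 V →ₗ[ℝ] W) (R : ℕ) :
    BddBelow {M : ℝ | 0 ≤ M ∧ ∀ c : C2 V, memC2R G R c → ‖f c‖ ≤ M * l1 c} :=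
  ⟨0, fun _ hx => hx.1⟩

lemma MfStar_nonneg {f : C2 V →ₗ[ℝ] W} (hf : Bdd2 G f) (R : ℕ) : 0 ≤ MfStar G f R :=
  le_csInf (MfStar_set_nonempty hf R) fun _ hM => hM.1

lemma MfStar_le {f : C2 V →ₗ[ℝ] W} {R : ℕ} {M : ℝ} (hM0 : 0 ≤ M)
    (hMv : ∀ c : C2 V, memC2R G R c → ‖f c‖ ≤ M * l1 c) : MfStar G f R ≤ M :=
  csInf_le (MfStar_bddBelow G f R) ⟨hM0, hMv⟩

lemma MfStar_valid {f : C2 V →ₗ[ℝ] W} (hf : Bdd2 G f) (R : ℕ) :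
    ∀ c : C2 V, memC2R G R c → ‖f c‖ ≤ MfStar G f R * l1 c := by
  intro c hc
  by_cases h0 : l1 c = 0
  · have : c = 0 := l1_eq_zero h0
    subst this
    simp [h0]
  · have hpos : 0 < l1 c := lt_of_le_of_ne (l1_nonneg c) (Ne.symm h0)
    rw [← div_le_iff₀ hpos]
    refine le_csInf (MfStar_set_nonempty hf R) fun M hM => ?_
    rw [div_le_iff₀ hpos]
    exact hM.2 c hc

lemma MfStar_mono {f : C2 V →ₗ[ℝ] W} (hf : Bdd2 G f) {R R' : ℕ} (h : R ≤ R') :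
    MfStar G f R ≤ MfStar G f R' :=
  csInf_le_csInf (MfStar_bddBelow G f R) (MfStar_set_nonempty hf R')
    fun M hM => ⟨hM.1, fun c hc => hM.2 c (memC2R_mono h hc)⟩

/-! ### Filling single pairs down to geodesic edge chains -/

lemma sum_single_smul (c : C1 V) :
    (c.support.sum fun t => (c t) • (single t (1:ℝ) : C1 V)) = c := by
  have h : ∀ t, (c t) • (single t (1:ℝ) : C1 V) = single t (c t) := fun t => by
    rw [Finsupp.smul_single, smul_eq_mul, mul_one]
  rw [Finset.sum_congr rfl fun t _ => h t]
  exact Finsupp.sum_single c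

lemma pair_fill (hconn : G.Connected) (c : C1 V) {R : ℕ} (hR : 1 ≤ R)
    (hc : memC1R G R c) :
    ∃ (Fc : C2 V) (Pc : C1 V), bdry2 Fc = c - Pc ∧ memC2R G R Fc ∧
      l1 Fc ≤ ((R:ℝ)+2) * l1 c ∧ (∀ t ∈ Pc.support, G.Adj t.1 t.2) ∧
      l1 Pc ≤ (R:ℝ) * l1 c ∧ bdry1 Pc = bdry1 c := by
  classical
  have pex : ∀ t : V × V, ∃ p : G.Walk t.1 t.2, p.length = G.dist t.1 t.2 :=
    fun t => hconn.exists_walk_length_eq_dist t.1 t.2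
  have hdist : ∀ t ∈ c.support, G.dist t.1 t.2 ≤ R := fun t ht => (hc t ht).2
  refine ⟨c.support.sum fun t => (c t) • (single (t.1,t.1,t.1) (1:ℝ) - fan t.1 (pex t).choose),
          c.support.sum fun t => (c t) • walkChain G (pex t).choose, ?_, ?_, ?_, ?_, ?_, ?_⟩
  · rw [map_sum]
    have hterm : ∀ t, bdry2 ((c t) • (single (t.1,t.1,t.1) (1:ℝ) - fan t.1 (pex t).choose))
        = (c t) • ((single t (1:ℝ) : C1 V) - walkChain G (pex t).choose) := by
      intro t
      rw [map_smul, map_sub, bdry2_single, bdry2_fan]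
      congr 1
      simp only [one_smul]
      abel
    rw [Finset.sum_congr rfl fun t _ => hterm t]
    have hterm2 : ∀ t : V × V, (c t) • ((single t (1:ℝ) : C1 V) - walkChain G (pex t).choose)
        = (c t) • (single t (1:ℝ) : C1 V) - (c t) • walkChain G (pex t).choose :=
      fun t => smul_sub _ _ _
    rw [Finset.sum_congr rfl fun t _ => hterm2 t, Finset.sum_sub_distrib, sum_single_smul]
  · refine memC2R_finsetsum _ _ fun t ht => memC2R_smul _ (memC2R_sub ?_ ?_)
    · exact memC2R_single (pairOK_of_dist hconn (by simp [SimpleGraph.dist_self]))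
        (pairOK_of_dist hconn (by simp [SimpleGraph.dist_self]))
        (pairOK_of_dist hconn (by simp [SimpleGraph.dist_self]))
    · refine memC2R_fan hconn _ hR fun w hw => ?_
      refine (dist_start_le_of_mem_support hconn _ hw).trans ?_
      rw [(pex t).choose_spec]
      exact hdist t ht
  · refine (l1_finsetsum_le _ _).trans ?_
    have hterm : ∀ t ∈ c.support,
        l1 ((c t) • (single (t.1,t.1,t.1) (1:ℝ) - fan t.1 (pex t).choose))
        ≤ |c t| * ((R:ℝ)+2) := by
      intro t ht
      rw [l1_smul]
      have h1 : l1 (single (t.1,t.1,t.1) (1:ℝ) - fan t.1 (pex t).choose)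
          ≤ 1 + ((pex t).choose.length : ℝ) := by
        refine (l1_sub_le _ _).trans ?_
        have ha := l1_single_le ((t.1,t.1,t.1) : V×V×V) (1:ℝ)
        have hb := l1_fan_le t.1 (pex t).choose
        simp only [abs_one] at ha
        linarith
      have h2 : ((pex t).choose.length : ℝ) ≤ (R:ℝ) := by
        rw [(pex t).choose_spec]
        exact_mod_cast hdist t ht
      have h3 := abs_nonneg (c t)
      nlinarith [l1_nonneg (single (t.1,t.1,t.1) (1:ℝ) - fan t.1 (pex t).choose)]
    refine (Finset.sum_le_sum hterm).trans ?_
    rw [← Finset.sum_mul, l1, mul_comm]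
  · intro t ht
    obtain ⟨i, hi, hti⟩ := Finsupp.mem_support_finset_sum t ht
    have h1 := Finsupp.support_smul hti
    obtain ⟨d, _, rfl⟩ := walkChain_support _ h1
    exact d.adj
  · refine (l1_finsetsum_le _ _).trans ?_
    have hterm : ∀ t ∈ c.support,
        l1 ((c t) • walkChain G (pex t).choose) ≤ |c t| * (R:ℝ) := by
      intro t ht
      rw [l1_smul]
      have h1 := l1_walkChain_le (pex t).choose
      have h2 : ((pex t).choose.length : ℝ) ≤ (R:ℝ) := by
        rw [(pex t).choose_spec]
        exact_mod_cast hdist t ht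
      have h3 := abs_nonneg (c t)
      nlinarith [l1_nonneg (walkChain G (pex t).choose)]
    refine (Finset.sum_le_sum hterm).trans ?_
    rw [← Finset.sum_mul, l1, mul_comm]
  · rw [map_sum]
    have hterm : ∀ t : V × V, bdry1 ((c t) • walkChain G (pex t).choose)
        = (c t) • ((single t.2 (1:ℝ) : C0 V) - single t.1 1) := fun t => by
      rw [map_smul, bdry1_walkChain]
    rw [Finset.sum_congr rfl fun t _ => hterm t]
    conv_rhs => rw [← sum_single_smul c]
    rw [map_sum]
    refine Finset.sum_congr rfl fun t _ => ?_
    rw [map_smul, bdry1_single]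
    rw [one_smul]

end HypH2
namespace HypH2

open Finsupp SimpleGraph

variable {V : Type*} {G : SimpleGraph V}

lemma list_sum_map_mul {α : Type*} (a : ℝ) (L : List α) (f : α → ℝ) :
    (L.map fun x => a * f x).sum = a * (L.map f).sum := by
  induction L with
  | nil => simp
  | cons q L ih => simp [ih, mul_add]

lemma list_sum_map_smul {α β : Type*} [AddCommMonoid β] [Module ℝ β] (r : ℝ)
    (L : List α) (f : α → β) :
    (L.map fun x => r • f x).sum = r • (L.map f).sum := by
  induction L with
  | nil => simp
  | cons q L ih => simp [ih, smul_add]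

lemma list_sum_map_neg {α β : Type*} [AddCommGroup β] (L : List α) (f : α → β) :
    (L.map fun x => -(f x)).sum = -(L.map f).sum := by
  induction L with
  | nil => simp
  | cons q L ih => simp [ih]; abel

/-! ### The decomposition norm -/

def decompSet (G : SimpleGraph V) (w : ℕ → ℝ) (R1 : ℕ) (c : C1 V) : Set ℝ :=
  {s | ∃ L : List (ℕ × C1 V), (∀ q ∈ L, R1 ≤ q.1 ∧ memC1R G q.1 q.2) ∧
    (L.map Prod.snd).sum = c ∧ s = (L.map fun q => w q.1 * l1 q.2).sum}

noncomputable def eNorm (G : SimpleGraph V) (w : ℕ → ℝ) (R1 : ℕ) (c : C1 V) : ℝ :=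
  sInf (decompSet G w R1 c)

lemma decompSet_nonempty (hconn : G.Connected) (w : ℕ → ℝ) (R1 : ℕ) (c : C1 V) :
    (decompSet G w R1 c).Nonempty := by
  classical
  set R := max R1 (c.support.sup fun t => G.dist t.1 t.2) with hR
  refine ⟨w R * l1 c, [(R, c)], ?_, by simp, by simp⟩
  intro q hq
  simp only [List.mem_singleton] at hq
  subst hq
  refine ⟨le_max_left _ _, fun t ht => ⟨hconn t.1 t.2, ?_⟩⟩
  exact le_trans (Finset.le_sup (f := fun t : V × V => G.dist t.1 t.2) ht) (le_max_right _ _)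

lemma decompSet_lower (hw : ∀ R, 1 ≤ w R) {R1 : ℕ} {c : C1 V} {s : ℝ}
    (hs : s ∈ decompSet G w R1 c) : l1 c ≤ s := by
  obtain ⟨L, hL, hsum, rfl⟩ := hs
  calc l1 c = l1 (L.map Prod.snd).sum := by rw [hsum]
    _ ≤ ((L.map Prod.snd).map l1).sum := l1_listsum_le _
    _ ≤ (L.map fun q => w q.1 * l1 q.2).sum := by
        rw [List.map_map]
        refine List.sum_le_sum fun q hq => ?_
        exact le_mul_of_one_le_left (l1_nonneg _) (hw q.1)

lemma decompSet_bddBelow (w : ℕ → ℝ) (hw : ∀ R, 1 ≤ w R) (R1 : ℕ) (c : C1 V) :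
    BddBelow (decompSet G w R1 c) :=
  ⟨l1 c, fun _ hs => decompSet_lower hw hs⟩

lemma l1_le_eNorm (hconn : G.Connected) {w : ℕ → ℝ} (hw : ∀ R, 1 ≤ w R) (R1 : ℕ) (c : C1 V) :
    l1 c ≤ eNorm G w R1 c :=
  le_csInf (decompSet_nonempty hconn w R1 c) fun _ hs => decompSet_lower hw hs

lemma eNorm_le_single {w : ℕ → ℝ} (hw : ∀ R, 1 ≤ w R) {R1 R : ℕ} {c : C1 V}
    (hR1 : R1 ≤ R) (hc : memC1R G R c) : eNorm G w R1 c ≤ w R * l1 c := by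
  refine csInf_le (decompSet_bddBelow w hw R1 c) ?_
  exact ⟨[(R, c)], by
    intro q hq
    simp only [List.mem_singleton] at hq
    subst hq
    exact ⟨hR1, hc⟩, by simp, by simp⟩

lemma eNorm_zero (hconn : G.Connected) {w : ℕ → ℝ} (hw : ∀ R, 1 ≤ w R) (R1 : ℕ) :
    eNorm G w R1 (0 : C1 V) = 0 := by
  refine le_antisymm ?_ ?_
  · refine csInf_le (decompSet_bddBelow w hw R1 0) ?_
    exact ⟨[], by simp, by simp, by simp⟩
  · have := l1_le_eNorm hconn hw R1 (0 : C1 V)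
    simpa using this

lemma eNorm_add_le (hconn : G.Connected) {w : ℕ → ℝ} (hw : ∀ R, 1 ≤ w R) (R1 : ℕ)
    (a b : C1 V) : eNorm G w R1 (a + b) ≤ eNorm G w R1 a + eNorm G w R1 b := by
  have key : ∀ s1 ∈ decompSet G w R1 a, ∀ s2 ∈ decompSet G w R1 b,
      eNorm G w R1 (a + b) ≤ s1 + s2 := by
    rintro s1 ⟨L1, hL1, hs1, rfl⟩ s2 ⟨L2, hL2, hs2, rfl⟩
    refine csInf_le (decompSet_bddBelow w hw R1 _) ?_
    refine ⟨L1 ++ L2, ?_, ?_, ?_⟩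
    · intro q hq
      rcases List.mem_append.mp hq with h | h
      · exact hL1 q h
      · exact hL2 q h
    · rw [List.map_append, List.sum_append, hs1, hs2]
    · rw [List.map_append, List.sum_append]
  have h1 : ∀ s2 ∈ decompSet G w R1 b,
      eNorm G w R1 (a + b) - s2 ≤ eNorm G w R1 a := by
    intro s2 hs2
    refine le_csInf (decompSet_nonempty hconn w R1 a) fun s1 hs1 => ?_
    linarith [key s1 hs1 s2 hs2]
  have h2 : eNorm G w R1 (a + b) - eNorm G w R1 a ≤ eNorm G w R1 b := by
    refine le_csInf (decompSet_nonempty hconn w R1 b) fun s2 hs2 => ?_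
    linarith [h1 s2 hs2]
  linarith

lemma decompSet_neg_subset (w : ℕ → ℝ) (R1 : ℕ) (c : C1 V) :
    decompSet G w R1 c ⊆ decompSet G w R1 (-c) := by
  rintro s ⟨L, hL, hsum, rfl⟩
  refine ⟨L.map fun q => (q.1, -q.2), ?_, ?_, ?_⟩
  · intro q hq
    obtain ⟨p, hp, rfl⟩ := List.mem_map.mp hq
    refine ⟨(hL p hp).1, ?_⟩
    intro t ht
    rw [Finsupp.support_neg] at ht
    exact (hL p hp).2 t ht
  · rw [List.map_map]
    have : (Prod.snd ∘ fun q : ℕ × C1 V => (q.1, -q.2)) = fun q : ℕ × C1 V => -(q.2) := rfl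
    rw [this, list_sum_map_neg, hsum]
  · rw [List.map_map]
    refine congrArg List.sum (List.map_congr_left fun q _ => ?_)
    show w q.1 * l1 q.2 = w q.1 * l1 (-(q.2))
    rw [l1_neg]

lemma eNorm_neg (w : ℕ → ℝ) (R1 : ℕ) (c : C1 V) :
    eNorm G w R1 (-c) = eNorm G w R1 c := by
  have h1 := decompSet_neg_subset (G := G) w R1 c
  have h2 := decompSet_neg_subset (G := G) w R1 (-c)
  rw [neg_neg] at h2
  rw [eNorm, eNorm, le_antisymm h2 h1]

lemma eNorm_smul_le (hconn : G.Connected) {w : ℕ → ℝ} (hw : ∀ R, 1 ≤ w R) (R1 : ℕ)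
    (r : ℝ) (c : C1 V) : eNorm G w R1 (r • c) ≤ |r| * eNorm G w R1 c := by
  rcases eq_or_ne r 0 with rfl | hr
  · rw [zero_smul, eNorm_zero hconn hw]
    have h0 : (0:ℝ) ≤ eNorm G w R1 c := le_trans (l1_nonneg c) (l1_le_eNorm hconn hw R1 c)
    simp only [abs_zero, zero_mul]
    exact le_rfl
  · have key : ∀ s ∈ decompSet G w R1 c, |r| * s ∈ decompSet G w R1 (r • c) := by
      rintro s ⟨L, hL, hsum, rfl⟩
      refine ⟨L.map fun q => (q.1, r • q.2), ?_, ?_, ?_⟩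
      · intro q hq
        obtain ⟨p, hp, rfl⟩ := List.mem_map.mp hq
        exact ⟨(hL p hp).1, memC1R_smul r (hL p hp).2⟩
      · rw [List.map_map]
        have he : (Prod.snd ∘ fun q : ℕ × C1 V => (q.1, r • q.2))
            = fun q : ℕ × C1 V => r • (q.2) := rfl
        rw [he]
        rw [list_sum_map_smul r L Prod.snd, hsum]
      · rw [List.map_map]
        have he : ((fun q : ℕ × C1 V => w q.1 * l1 q.2) ∘ fun q : ℕ × C1 V => (q.1, r • q.2))
            = fun q : ℕ × C1 V => |r| * (w q.1 * l1 q.2) := by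
          funext q
          simp only [Function.comp_apply]
          rw [l1_smul]
          ring
        rw [he, list_sum_map_mul]
    have h2 : ∀ s ∈ decompSet G w R1 c, eNorm G w R1 (r • c) / |r| ≤ s := by
      intro s hs
      rw [div_le_iff₀ (abs_pos.mpr hr), mul_comm]
      exact csInf_le (decompSet_bddBelow w hw R1 _) (key s hs)
    have h3 : eNorm G w R1 (r • c) / |r| ≤ eNorm G w R1 c :=
      le_csInf (decompSet_nonempty hconn w R1 c) h2
    rw [div_le_iff₀ (abs_pos.mpr hr)] at h3
    linarith [h3]

/-! ### The normed space -/

def EE (V : Type) (G : SimpleGraph V) (w : ℕ → ℝ) (R1 : ℕ)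
    (_ : G.Connected) (_ : ∀ R, 1 ≤ w R) : Type := C1 V

section EEInst

variable {V : Type} {G : SimpleGraph V} {w : ℕ → ℝ} {R1 : ℕ}
  {hconn : G.Connected} {hw : ∀ R, 1 ≤ w R}

noncomputable instance : AddCommGroup (EE V G w R1 hconn hw) := inferInstanceAs (AddCommGroup (C1 V))
noncomputable instance : Module ℝ (EE V G w R1 hconn hw) := inferInstanceAs (Module ℝ (C1 V))

noncomputable instance : NormedAddCommGroup (EE V G w R1 hconn hw) :=
  AddGroupNorm.toNormedAddCommGroup
    { toFun := fun c => eNorm G w R1 c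
      map_zero' := eNorm_zero hconn hw R1
      add_le' := eNorm_add_le hconn hw R1
      neg' := eNorm_neg w R1
      eq_zero_of_map_eq_zero' := by
        intro c hc
        have hc' : eNorm G w R1 c = 0 := hc
        have h1 := l1_le_eNorm hconn hw R1 c
        rw [hc'] at h1
        exact l1_eq_zero (le_antisymm h1 (l1_nonneg c))
  }

noncomputable instance : NormedSpace ℝ (EE V G w R1 hconn hw) :=
  ⟨fun r c => eNorm_smul_le hconn hw R1 r c⟩

/-- The identity as a linear equivalence from `C1 V` to the renormed copy. -/
noncomputable def toEE (G : SimpleGraph V) (w : ℕ → ℝ) (R1 : ℕ) (hconn : G.Connected)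
    (hw : ∀ R, 1 ≤ w R) : C1 V ≃ₗ[ℝ] EE V G w R1 hconn hw :=
  LinearEquiv.refl ℝ (C1 V)

lemma norm_toEE (c : C1 V) : ‖toEE G w R1 hconn hw c‖ = eNorm G w R1 c := rfl

end EEInst

end HypH2
namespace HypH2

open Finsupp SimpleGraph

variable {V : Type*} {G : SimpleGraph V}
variable {W : Type*} [NormedAddCommGroup W] [NormedSpace ℝ W]

noncomputable def wfun (G : SimpleGraph V) (f : C2 V →ₗ[ℝ] W) (δ : ℕ) : ℕ → ℝ := fun R =>
  1 + MfStar G f R * ((16*(δ:ℝ)+18) * R + ((R:ℝ)+2))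

lemma wfun_ge_one {f : C2 V →ₗ[ℝ] W} (hf : Bdd2 G f) (δ : ℕ) : ∀ R, 1 ≤ wfun G f δ R := by
  intro R
  have h1 := MfStar_nonneg hf R
  have h2 : (0:ℝ) ≤ (16*(δ:ℝ)+18) * R + ((R:ℝ)+2) := by positivity
  rw [wfun]
  nlinarith

lemma master (hconn : G.Connected) {δ : ℕ} (hslim : SlimTriangles G δ) (v₀ : V)
    (f : C2 V →ₗ[ℝ] W) (hf2 : Bdd2 G f) (hf3 : ∀ a : C3 V, f (bdry3 a) = 0)
    {b : C1 V} (hb : bdry1 b = 0) {s : ℝ}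
    (hs : s ∈ decompSet G (wfun G f δ) (8*δ+8) b) :
    ‖f (coneOp v₀ b)‖ ≤ s := by
  classical
  obtain ⟨L, hL, hsum, rfl⟩ := hs
  set K0 := MfStar G f (8*δ+8) * (16*(δ:ℝ)+18) with hK0
  have hK0nn : 0 ≤ K0 := mul_nonneg (MfStar_nonneg hf2 _) (by positivity)
  have key : ∀ L' : List (ℕ × C1 V), (∀ q ∈ L', 8*δ+8 ≤ q.1 ∧ memC1R G q.1 q.2) →
      ∃ (zz : C1 V) (A : C2 V),
        (∀ t ∈ zz.support, G.Adj t.1 t.2) ∧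
        bdry1 zz = bdry1 (L'.map Prod.snd).sum ∧
        bdry2 A = (L'.map Prod.snd).sum - zz ∧
        ‖f A‖ + K0 * l1 zz ≤ (L'.map fun q => wfun G f δ q.1 * l1 q.2).sum := by
    intro L'
    induction L' with
    | nil =>
      intro _
      exact ⟨0, 0, by simp, by simp, by simp, by simp⟩
    | cons q L' ihL =>
      intro hq
      obtain ⟨zz, A, h1, h2, h3, h4⟩ := ihL fun p hp => hq p (List.mem_cons_of_mem _ hp)
      have hq1 := hq q List.mem_cons_self
      have hR1 : 1 ≤ q.1 := by omega
      obtain ⟨Fc, Pc, g1, g2, g3, g4, g5, g6⟩ := pair_fill hconn q.2 hR1 hq1.2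
      refine ⟨Pc + zz, Fc + A, ?_, ?_, ?_, ?_⟩
      · intro t ht
        rcases Finset.mem_union.mp (Finsupp.support_add ht) with h | h
        · exact g4 t h
        · exact h1 t h
      · rw [map_add, g6, h2]
        simp only [List.map_cons, List.sum_cons, map_add]
      · rw [map_add, g1, h3]
        simp only [List.map_cons, List.sum_cons]
        abel
      · have e1 : ‖f (Fc + A)‖ ≤ ‖f Fc‖ + ‖f A‖ := by
          rw [map_add]; exact norm_add_le _ _
        have e2 : ‖f Fc‖ ≤ MfStar G f q.1 * (((q.1:ℝ)+2) * l1 q.2) := by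
          refine (MfStar_valid hf2 q.1 Fc g2).trans ?_
          exact mul_le_mul_of_nonneg_left g3 (MfStar_nonneg hf2 _)
        have e3 : l1 (Pc + zz) ≤ l1 Pc + l1 zz := l1_add_le _ _
        have e4 : K0 * l1 Pc ≤ MfStar G f q.1 * ((16*(δ:ℝ)+18) * ((q.1:ℝ) * l1 q.2)) := by
          have hmono : MfStar G f (8*δ+8) ≤ MfStar G f q.1 := MfStar_mono hf2 hq1.1
          have hnn1 : (0:ℝ) ≤ 16*(δ:ℝ)+18 := by positivity
          have hq2 : (0:ℝ) ≤ (q.1:ℝ) * l1 q.2 := mul_nonneg (Nat.cast_nonneg _) (l1_nonneg _)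
          calc K0 * l1 Pc ≤ K0 * ((q.1:ℝ) * l1 q.2) :=
                mul_le_mul_of_nonneg_left g5 hK0nn
            _ = MfStar G f (8*δ+8) * ((16*(δ:ℝ)+18) * ((q.1:ℝ) * l1 q.2)) := by
                rw [hK0]; ring
            _ ≤ MfStar G f q.1 * ((16*(δ:ℝ)+18) * ((q.1:ℝ) * l1 q.2)) :=
                mul_le_mul_of_nonneg_right hmono (mul_nonneg hnn1 hq2)
        have e5 : (0:ℝ) ≤ l1 q.2 := l1_nonneg q.2
        simp only [List.map_cons, List.sum_cons]
        have e6 : MfStar G f q.1 * (((q.1:ℝ)+2) * l1 q.2)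
            + MfStar G f q.1 * ((16*(δ:ℝ)+18) * ((q.1:ℝ) * l1 q.2))
            ≤ wfun G f δ q.1 * l1 q.2 := by
          rw [wfun]
          nlinarith [MfStar_nonneg hf2 q.1]
        have e7 := mul_le_mul_of_nonneg_left e3 hK0nn
        linarith
  obtain ⟨zz, A, h1, h2, h3, h4⟩ := key L hL
  rw [hsum] at h2 h3
  rw [hb] at h2
  obtain ⟨Gz, i1, i2, i3⟩ := isofill hconn hslim zz h1 h2
  have hfill : bdry2 (A + Gz) = b := by rw [map_add, h3, i2]; abel
  have heq : f (coneOp v₀ b) = f (A + Gz) := (fill_indep f hf3 v₀ hfill hb).symm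
  rw [heq]
  have e7 : ‖f (A + Gz)‖ ≤ ‖f A‖ + ‖f Gz‖ := by rw [map_add]; exact norm_add_le _ _
  have e8 : ‖f Gz‖ ≤ MfStar G f (8*δ+8) * ((16*(δ:ℝ)+18) * l1 zz) := by
    refine (MfStar_valid hf2 _ Gz i1).trans ?_
    exact mul_le_mul_of_nonneg_left i3 (MfStar_nonneg hf2 _)
  have e9 : MfStar G f (8*δ+8) * ((16*(δ:ℝ)+18) * l1 zz) = K0 * l1 zz := by
    rw [hK0]; ring
  linarith

end HypH2
/-- for δ-hyperbolic graphs and 1-injective Banach spaces W,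
every bounded 2-cocycle is the coboundary of a bounded 1-cochain, with
quantitative control K(R,|f|) depending only on δ; in particular
H²_{(∞)}(X;W) = 0. -/
theorem hyperbolic_vanishing_H2 :
    ∀ δ : ℕ, ∃ (R₀ : ℕ) (K : ℕ → ℝ → ℝ),
      ∀ (V : Type) (G : SimpleGraph V), G.Connected → SlimTriangles G δ →
      ∀ (W : Type) [NormedAddCommGroup W] [NormedSpace ℝ W] [CompleteSpace W],
        IsOneInjective W →
        ∀ f : C2 V →ₗ[ℝ] W, Bdd2 G f → (∀ a : C3 V, f (bdry3 a) = 0) →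
          ∃ g : C1 V →ₗ[ℝ] W, Bdd1 G g ∧ f = g.comp bdry2 ∧
            ∀ R, R₀ ≤ R → ∀ Mf : ℝ, 0 ≤ Mf →
              (∀ c : C2 V, memC2R G R c → ‖f c‖ ≤ Mf * l1 c) →
              ∀ c : C1 V, memC1R G R c → ‖g c‖ ≤ K R Mf * l1 c := by
  intro δ
  classical
  refine ⟨8*δ+8, fun R M => 1 + M * ((16*(δ:ℝ)+18) * R + ((R:ℝ)+2)), ?_⟩
  intro V G hconn hslim W _ _ _ hinj f hf2 hf3
  obtain ⟨v₀⟩ := hconn.nonempty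
  have hw : ∀ R, 1 ≤ HypH2.wfun G f δ R := HypH2.wfun_ge_one hf2 δ
  set T := HypH2.toEE G (HypH2.wfun G f δ) (8*δ+8) hconn hw with hT
  set Z : Submodule ℝ (HypH2.EE V G (HypH2.wfun G f δ) (8*δ+8) hconn hw) :=
    LinearMap.ker ((bdry1 (V := V)).comp (T.symm.toLinearMap)) with hZ
  set φ0 : Z →ₗ[ℝ] W :=
    ((f.comp (HypH2.coneOp v₀)).comp T.symm.toLinearMap).comp Z.subtype with hφ0
  have hZmem : ∀ x : Z, bdry1 (T.symm (x : HypH2.EE V G (HypH2.wfun G f δ) (8*δ+8) hconn hw)) = 0 := by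
    intro x
    exact LinearMap.mem_ker.mp x.2
  have hφb : ∀ x : Z, ‖φ0 x‖ ≤ 1 * ‖x‖ := by
    intro x
    rw [one_mul]
    have hx := hZmem x
    have hnorm : ‖x‖ = HypH2.eNorm G (HypH2.wfun G f δ) (8*δ+8)
        (T.symm (x : HypH2.EE V G (HypH2.wfun G f δ) (8*δ+8) hconn hw)) := rfl
    rw [hnorm]
    refine le_csInf (HypH2.decompSet_nonempty hconn _ _ _) fun s hs => ?_
    exact HypH2.master hconn hslim v₀ f hf2 hf3 hx hs
  set φ : Z →L[ℝ] W := LinearMap.mkContinuous φ0 1 hφb with hφ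
  obtain ⟨ψ, hψeq, hψnorm⟩ := hinj (HypH2.EE V G (HypH2.wfun G f δ) (8*δ+8) hconn hw) Z φ
  have hψ1 : ‖ψ‖ ≤ 1 :=
    le_trans hψnorm (LinearMap.mkContinuous_norm_le φ0 zero_le_one hφb)
  set g : C1 V →ₗ[ℝ] W := (ψ.toLinearMap).comp T.toLinearMap with hg
  have hgb : ∀ a : C2 V, g (bdry2 a) = f a := by
    intro a
    have hcyc : bdry1 (bdry2 a) = 0 := DFunLike.congr_fun HypH2.bdry1_bdry2 a
    have hmem : T (bdry2 a) ∈ Z := by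
      refine LinearMap.mem_ker.mpr ?_
      simpa [T.symm_apply_apply] using hcyc
    have h1 : g (bdry2 a) = ψ ((⟨T (bdry2 a), hmem⟩ : Z) :
        HypH2.EE V G (HypH2.wfun G f δ) (8*δ+8) hconn hw) := rfl
    rw [h1, hψeq ⟨T (bdry2 a), hmem⟩]
    show f (HypH2.coneOp v₀ (T.symm (T (bdry2 a)))) = f a
    rw [T.symm_apply_apply]
    exact (HypH2.fill_indep f hf3 v₀ rfl hcyc).symm
  have hkey : ∀ (R : ℕ) (c : C1 V), 8*δ+8 ≤ R → memC1R G R c →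
      ‖g c‖ ≤ HypH2.wfun G f δ R * l1 c := by
    intro R c hR hc
    have h1 : ‖g c‖ ≤ ‖ψ‖ * ‖T c‖ := ψ.le_opNorm _
    have h2 : ‖T c‖ = HypH2.eNorm G (HypH2.wfun G f δ) (8*δ+8) c := rfl
    have h3 := HypH2.eNorm_le_single (G := G) hw hR hc
    have h4 : ‖ψ‖ * ‖T c‖ ≤ 1 * (HypH2.wfun G f δ R * l1 c) := by
      refine mul_le_mul hψ1 ?_ (norm_nonneg _) zero_le_one
      rw [h2]; exact h3
    rw [one_mul] at h4
    linarith
  refine ⟨g, ?_, ?_, ?_⟩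
  · intro R
    refine ⟨HypH2.wfun G f δ (max R (8*δ+8)), fun c hc => ?_⟩
    exact hkey _ c (le_max_right _ _) (HypH2.memC1R_mono (le_max_left _ _) hc)
  · exact LinearMap.ext fun a => (hgb a).symm
  · intro R hR Mf hMf0 hMfv c hc
    have h1 := hkey R c hR hc
    have h2 : HypH2.MfStar G f R ≤ Mf := HypH2.MfStar_le hMf0 hMfv
    have h3 : HypH2.wfun G f δ R ≤ 1 + Mf * ((16*(δ:ℝ)+18) * R + ((R:ℝ)+2)) := by
      rw [HypH2.wfun]
      have h5 : (0:ℝ) ≤ (16*(δ:ℝ)+18) * R + ((R:ℝ)+2) := by positivity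
      nlinarith
    have h4 := HypH2.l1_nonneg c
    calc ‖g c‖ ≤ HypH2.wfun G f δ R * l1 c := h1
      _ ≤ (1 + Mf * ((16*(δ:ℝ)+18) * R + ((R:ℝ)+2))) * l1 c :=
          mul_le_mul_of_nonneg_right h3 h4
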